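/- Let H̃ be a finite subgroup of U(1) × SU(2) containing (−1, −1) and (e(1/3), 1) whose projection to SU(2) equals the binary octahedral group 2O, and suppose the subgroup H = π(H̃) of SU(3) satisfies the restricted rationality condition. Then H is conjugate in SU(3) to one of the two subgroups π({(u, g) ∈ μ₁₂ × 2O : u⁶ = χ(g)}) and π({(u, g) ∈ μ₂₄ × 2O : u¹² = χ(g)}), where χ : 2O → {±1} is the unique homomorphism with kernel the binary tetrahedral group 2T. Moreover, the first of these two subgroups is not conjugate in SU(3) to any subgroup of the second. -/

import Mathlib

noncomputable section

open Matrix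

abbrev UG3 := Matrix.unitaryGroup (Fin 3) ℂ

/-- The special unitary group SU(3), as a subgroup of the 3×3 unitary group:
matrices that are unitary and have determinant 1. -/
def SU3 : Subgroup ↥UG3 := MonoidHom.ker (Matrix.detMonoidHom.comp UG3.subtype)

abbrev G3 := ↥SU3

/-- The underlying 3×3 complex matrix of an element of SU(3). -/
def m3 (x : G3) : Matrix (Fin 3) (Fin 3) ℂ := ((x : ↥UG3) : Matrix (Fin 3) (Fin 3) ℂ)

/-- `e(x) = exp(2πi·x)`. -/
def eQ (x : ℚ) : ℂ := Complex.exp (2 * Real.pi * Complex.I * (x : ℂ))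

/-- `D(u,v,w) = diag(e(u), e(v), e(w))`. -/
def Dm (u v w : ℚ) : Matrix (Fin 3) (Fin 3) ℂ := Matrix.diagonal ![eQ u, eQ v, eQ w]

/-- The subgroup of SU(3) generated by the elements whose matrices lie in `s`. -/
def sgOf (s : Set (Matrix (Fin 3) (Fin 3) ℂ)) : Subgroup G3 :=
  Subgroup.closure {x : G3 | m3 x ∈ s}

/-- μ₃ : the subgroup of SU(3) of scalar matrices ζ·1 with ζ³ = 1. -/
def mu3 : Subgroup G3 :=
  sgOf {M | ∃ ζ : ℂ, ζ ^ 3 = 1 ∧ M = ζ • (1 : Matrix (Fin 3) (Fin 3) ℂ)}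

/-- The restricted rationality condition: |Trace A|² ∈ ℤ for all A ∈ H. -/
def RRC (H : Subgroup G3) : Prop :=
  ∀ x ∈ H, ∃ k : ℤ, ‖Matrix.trace (m3 x)‖ ^ 2 = (k : ℝ)

/-- Two subgroups of SU(3) are conjugate if one is carried onto the other by
conjugation by an element of SU(3). -/
def IsConjSub (H K : Subgroup G3) : Prop :=
  ∃ g : G3, Subgroup.map (MulAut.conj g).toMonoidHom H = K

-- matrices S, T₁, T₂, T₄, P₂₃
def Sm : Matrix (Fin 3) (Fin 3) ℂ := !![0, 0, 1; 1, 0, 0; 0, 1, 0]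

def Rm (ξ α : ℂ) : Matrix (Fin 3) (Fin 3) ℂ :=
  !![-(starRingEnd ℂ ξ), 0, 0; 0, 0, -(starRingEnd ℂ α); 0, -(ξ * α), 0]

def T1m : Matrix (Fin 3) (Fin 3) ℂ := Rm 1 1
def T2m : Matrix (Fin 3) (Fin 3) ℂ := Rm (-1) Complex.I
def T4m : Matrix (Fin 3) (Fin 3) ℂ := Rm Complex.I (eQ (3/8))

def P23 : Matrix (Fin 3) (Fin 3) ℂ := !![1, 0, 0; 0, 0, 1; 0, 1, 0]


abbrev UG2 := Matrix.unitaryGroup (Fin 2) ℂ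

/-- The special unitary group SU(2). -/
def SU2 : Subgroup ↥UG2 := MonoidHom.ker (Matrix.detMonoidHom.comp UG2.subtype)

abbrev G2 := ↥SU2

def m2 (x : G2) : Matrix (Fin 2) (Fin 2) ℂ := ((x : ↥UG2) : Matrix (Fin 2) (Fin 2) ℂ)

/-- The 2×2 matrix corresponding to the quaternion a + bi + cj + dk. -/
def qmat (a b c d : ℝ) : Matrix (Fin 2) (Fin 2) ℂ :=
  !![(a : ℂ) + b * Complex.I, (c : ℂ) + d * Complex.I;
     -(c : ℂ) + d * Complex.I, (a : ℂ) - b * Complex.I]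

/-- The binary tetrahedral group 2T = {±1, ±i, ±j, ±k, (±1 ± i ± j ± k)/2},
as a set of 2×2 matrices. -/
def twoT : Set (Matrix (Fin 2) (Fin 2) ℂ) :=
  {qmat 1 0 0 0, qmat (-1) 0 0 0, qmat 0 1 0 0, qmat 0 (-1) 0 0,
   qmat 0 0 1 0, qmat 0 0 (-1) 0, qmat 0 0 0 1, qmat 0 0 0 (-1)} ∪
  {M | ∃ a b c d : ℝ, (a = 1/2 ∨ a = -(1/2)) ∧ (b = 1/2 ∨ b = -(1/2)) ∧
    (c = 1/2 ∨ c = -(1/2)) ∧ (d = 1/2 ∨ d = -(1/2)) ∧ M = qmat a b c d}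

/-- The binary octahedral group 2O = 2T ∪ 2T·((1+i)/√2), as a set of 2×2 matrices. -/
def twoO : Set (Matrix (Fin 2) (Fin 2) ℂ) :=
  twoT ∪ (fun M => M * qmat (Real.sqrt 2)⁻¹ (Real.sqrt 2)⁻¹ 0 0) '' twoT

/-- The 3×3 matrix π(u, A) : block-diagonal with (1,1) entry u² and lower-right
2×2 block u⁻¹·A. -/
def su3block (u : ℂ) (A : Matrix (Fin 2) (Fin 2) ℂ) : Matrix (Fin 3) (Fin 3) ℂ :=
  !![u ^ 2, 0, 0;
     0, u⁻¹ * A 0 0, u⁻¹ * A 0 1;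
     0, u⁻¹ * A 1 0, u⁻¹ * A 1 1]

/-- The map π on U(1) × SU(2), at the matrix level. -/
def piMat (p : ↥(unitary ℂ) × G2) : Matrix (Fin 3) (Fin 3) ℂ :=
  su3block (p.1 : ℂ) (m2 p.2)

/-- π({(u, g) ∈ μ_{2m} × 2O : u^m = χ(g)}) where χ : 2O → {±1} is the unique
homomorphism with kernel 2T, as a set of 3×3 matrices. -/
def BO (m : ℕ) : Set (Matrix (Fin 3) (Fin 3) ℂ) :=
  {M | ∃ u : ℂ, u ^ (2 * m) = 1 ∧ ∃ A ∈ twoO,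
    ((A ∈ twoT ∧ u ^ m = 1) ∨ (A ∉ twoT ∧ u ^ m = -1)) ∧ M = su3block u A}


-- ===== auxiliary development =====


lemma qmat_mul (a b c d a' b' c' d' : ℝ) :
    qmat a b c d * qmat a' b' c' d' =
      qmat (a*a' - b*b' - c*c' - d*d') (a*b' + b*a' + c*d' - d*c')
           (a*c' - b*d' + c*a' + d*b') (a*d' + b*c' - c*b' + d*a') := by
  ext i j
  fin_cases i <;> fin_cases j <;>
    simp [qmat, Matrix.mul_apply, Fin.sum_univ_two] <;> ring_nf <;>
    simp [Complex.ext_iff] <;> ring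

lemma qmat_star (a b c d : ℝ) : star (qmat a b c d) = qmat a (-b) (-c) (-d) := by
  ext i j
  fin_cases i <;> fin_cases j <;>
    simp [qmat, Matrix.conjTranspose_apply, Complex.ext_iff]

lemma qmat_congr {a b c d a' b' c' d' : ℝ} (h1 : a = a') (h2 : b = b') (h3 : c = c')
    (h4 : d = d') : qmat a b c d = qmat a' b' c' d' := by subst h1 h2 h3 h4; rfl

lemma qmat_inj {a b c d a' b' c' d' : ℝ} (h : qmat a b c d = qmat a' b' c' d') :
    a = a' ∧ b = b' ∧ c = c' ∧ d = d' := by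
  have h00 := congrFun (congrFun h 0) 0
  have h01 := congrFun (congrFun h 0) 1
  simp [qmat, Complex.ext_iff] at h00 h01
  exact ⟨h00.1, h00.2, h01.1, h01.2⟩

lemma qmat_trace (a b c d : ℝ) : (qmat a b c d).trace = 2 * (a:ℂ) := by
  simp [Matrix.trace_fin_two, qmat]; ring

lemma qmat_det (a b c d : ℝ) : (qmat a b c d).det = ((a^2 + b^2 + c^2 + d^2 : ℝ) : ℂ) := by
  simp [Matrix.det_fin_two, qmat]
  push_cast
  linear_combination (-(b:ℂ)^2 - (d:ℂ)^2) * Complex.I_sq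

abbrev Z4 := ℤ × ℤ × ℤ × ℤ

def qmul (x y : Z4) : Z4 :=
  (x.1*y.1 - x.2.1*y.2.1 - x.2.2.1*y.2.2.1 - x.2.2.2*y.2.2.2,
   x.1*y.2.1 + x.2.1*y.1 + x.2.2.1*y.2.2.2 - x.2.2.2*y.2.2.1,
   x.1*y.2.2.1 - x.2.1*y.2.2.2 + x.2.2.1*y.1 + x.2.2.2*y.2.1,
   x.1*y.2.2.2 + x.2.1*y.2.2.1 - x.2.2.1*y.2.1 + x.2.2.2*y.1)

def dbl (x : Z4) : Z4 := (2*x.1, 2*x.2.1, 2*x.2.2.1, 2*x.2.2.2)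

def conjq (x : Z4) : Z4 := (x.1, -x.2.1, -x.2.2.1, -x.2.2.2)

/-- realization of a doubled integer quaternion -/
def qmatH (x : Z4) : Matrix (Fin 2) (Fin 2) ℂ :=
  qmat ((x.1:ℝ)/2) ((x.2.1:ℝ)/2) ((x.2.2.1:ℝ)/2) ((x.2.2.2:ℝ)/2)

/-- realization of a √2-type quaternion with integer descriptor -/
def qmatO (x : Z4) : Matrix (Fin 2) (Fin 2) ℂ :=
  qmat ((Real.sqrt 2)⁻¹ * x.1) ((Real.sqrt 2)⁻¹ * x.2.1)
       ((Real.sqrt 2)⁻¹ * x.2.2.1) ((Real.sqrt 2)⁻¹ * x.2.2.2)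

lemma r2 : (Real.sqrt 2)⁻¹ * (Real.sqrt 2)⁻¹ = 1/2 := by
  rw [← mul_inv]
  rw [show Real.sqrt 2 * Real.sqrt 2 = 2 from Real.mul_self_sqrt (by norm_num)]
  norm_num


lemma mulHH {X Y Z : Z4} (h : qmul X Y = dbl Z) : qmatH X * qmatH Y = qmatH Z := by
  obtain ⟨a,b,c,d⟩ := X; obtain ⟨a',b',c',d'⟩ := Y; obtain ⟨e,f,g,k⟩ := Z
  simp only [qmul, dbl, Prod.mk.injEq] at h
  obtain ⟨h1, h2, h3, h4⟩ := h
  have R1 := congrArg (fun t : ℤ => (t : ℝ)) h1; push_cast at R1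
  have R2 := congrArg (fun t : ℤ => (t : ℝ)) h2; push_cast at R2
  have R3 := congrArg (fun t : ℤ => (t : ℝ)) h3; push_cast at R3
  have R4 := congrArg (fun t : ℤ => (t : ℝ)) h4; push_cast at R4
  rw [qmatH, qmatH, qmatH, qmat_mul]
  push_cast
  exact qmat_congr (by linear_combination R1/4) (by linear_combination R2/4)
    (by linear_combination R3/4) (by linear_combination R4/4)

lemma mulHO {X q z : Z4} (h : qmul X q = dbl z) : qmatH X * qmatO q = qmatO z := by
  obtain ⟨a,b,c,d⟩ := X; obtain ⟨a',b',c',d'⟩ := q; obtain ⟨e,f,g,k⟩ := z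
  simp only [qmul, dbl, Prod.mk.injEq] at h
  obtain ⟨h1, h2, h3, h4⟩ := h
  have R1 := congrArg (fun t : ℤ => (t : ℝ)) h1; push_cast at R1
  have R2 := congrArg (fun t : ℤ => (t : ℝ)) h2; push_cast at R2
  have R3 := congrArg (fun t : ℤ => (t : ℝ)) h3; push_cast at R3
  have R4 := congrArg (fun t : ℤ => (t : ℝ)) h4; push_cast at R4
  rw [qmatH, qmatO, qmatO, qmat_mul]
  push_cast
  exact qmat_congr (by linear_combination (Real.sqrt 2)⁻¹ * R1/2)
    (by linear_combination (Real.sqrt 2)⁻¹ * R2/2)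
    (by linear_combination (Real.sqrt 2)⁻¹ * R3/2)
    (by linear_combination (Real.sqrt 2)⁻¹ * R4/2)

lemma mulOH {q Y z : Z4} (h : qmul q Y = dbl z) : qmatO q * qmatH Y = qmatO z := by
  obtain ⟨a,b,c,d⟩ := q; obtain ⟨a',b',c',d'⟩ := Y; obtain ⟨e,f,g,k⟩ := z
  simp only [qmul, dbl, Prod.mk.injEq] at h
  obtain ⟨h1, h2, h3, h4⟩ := h
  have R1 := congrArg (fun t : ℤ => (t : ℝ)) h1; push_cast at R1
  have R2 := congrArg (fun t : ℤ => (t : ℝ)) h2; push_cast at R2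
  have R3 := congrArg (fun t : ℤ => (t : ℝ)) h3; push_cast at R3
  have R4 := congrArg (fun t : ℤ => (t : ℝ)) h4; push_cast at R4
  rw [qmatO, qmatH, qmatO, qmat_mul]
  push_cast
  exact qmat_congr (by linear_combination (Real.sqrt 2)⁻¹ * R1/2)
    (by linear_combination (Real.sqrt 2)⁻¹ * R2/2)
    (by linear_combination (Real.sqrt 2)⁻¹ * R3/2)
    (by linear_combination (Real.sqrt 2)⁻¹ * R4/2)

lemma mulOO {q q' Z : Z4} (h : qmul q q' = Z) : qmatO q * qmatO q' = qmatH Z := by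
  obtain ⟨a,b,c,d⟩ := q; obtain ⟨a',b',c',d'⟩ := q'; obtain ⟨e,f,g,k⟩ := Z
  simp only [qmul, Prod.mk.injEq] at h
  obtain ⟨h1, h2, h3, h4⟩ := h
  have R1 := congrArg (fun t : ℤ => (t : ℝ)) h1; push_cast at R1
  have R2 := congrArg (fun t : ℤ => (t : ℝ)) h2; push_cast at R2
  have R3 := congrArg (fun t : ℤ => (t : ℝ)) h3; push_cast at R3
  have R4 := congrArg (fun t : ℤ => (t : ℝ)) h4; push_cast at R4
  rw [qmatO, qmatO, qmatH, qmat_mul]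
  push_cast
  refine qmat_congr ?_ ?_ ?_ ?_
  · linear_combination R1/2 + ((a:ℝ)*a' - (b:ℝ)*b' - (c:ℝ)*c' - (d:ℝ)*d') * r2
  · linear_combination R2/2 + ((a:ℝ)*b' + (b:ℝ)*a' + (c:ℝ)*d' - (d:ℝ)*c') * r2
  · linear_combination R3/2 + ((a:ℝ)*c' - (b:ℝ)*d' + (c:ℝ)*a' + (d:ℝ)*b') * r2
  · linear_combination R4/2 + ((a:ℝ)*d' + (b:ℝ)*c' - (c:ℝ)*b' + (d:ℝ)*a') * r2

lemma mulHHH {A B C P : Z4} (h : qmul (qmul A B) C = dbl (dbl P)) :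
    qmatH A * qmatH B * qmatH C = qmatH P := by
  obtain ⟨a1,a2,a3,a4⟩ := A; obtain ⟨b1,b2,b3,b4⟩ := B
  obtain ⟨c1,c2,c3,c4⟩ := C; obtain ⟨p1,p2,p3,p4⟩ := P
  simp only [qmul, dbl, Prod.mk.injEq] at h
  obtain ⟨h1, h2, h3, h4⟩ := h
  have R1 := congrArg (fun t : ℤ => (t : ℝ)) h1; push_cast at R1
  have R2 := congrArg (fun t : ℤ => (t : ℝ)) h2; push_cast at R2
  have R3 := congrArg (fun t : ℤ => (t : ℝ)) h3; push_cast at R3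
  have R4 := congrArg (fun t : ℤ => (t : ℝ)) h4; push_cast at R4
  rw [qmatH, qmatH, qmatH, qmatH, qmat_mul, qmat_mul]
  push_cast
  exact qmat_congr (by linear_combination R1/8) (by linear_combination R2/8)
    (by linear_combination R3/8) (by linear_combination R4/8)

lemma starH (X : Z4) : star (qmatH X) = qmatH (conjq X) := by
  rw [qmatH, qmat_star, conjq, qmatH]
  push_cast
  exact qmat_congr rfl (by ring) (by ring) (by ring)

lemma starO (q : Z4) : star (qmatO q) = qmatO (conjq q) := by
  rw [qmatO, qmat_star, conjq, qmatO]
  push_cast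
  exact qmat_congr rfl (by ring) (by ring) (by ring)



def tset2 : List Z4 :=
  [(2,0,0,0), (-2,0,0,0), (0,2,0,0), (0,-2,0,0), (0,0,2,0), (0,0,-2,0), (0,0,0,2), (0,0,0,-2),
   (1,1,1,1), (1,1,1,-1), (1,1,-1,1), (1,1,-1,-1),
   (1,-1,1,1), (1,-1,1,-1), (1,-1,-1,1), (1,-1,-1,-1),
   (-1,1,1,1), (-1,1,1,-1), (-1,1,-1,1), (-1,1,-1,-1),
   (-1,-1,1,1), (-1,-1,1,-1), (-1,-1,-1,1), (-1,-1,-1,-1)]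

def oset1 : List Z4 :=
  [(1, 1, 0, 0), (-1, -1, 0, 0), (-1, 1, 0, 0), (1, -1, 0, 0), (0, 0, 1, -1), (0, 0, -1, 1),
   (0, 0, 1, 1), (0, 0, -1, -1), (0, 1, 1, 0), (0, 1, 0, -1), (0, 1, 0, 1), (0, 1, -1, 0),
   (1, 0, 1, 0), (1, 0, 0, -1), (1, 0, 0, 1), (1, 0, -1, 0), (-1, 0, 1, 0), (-1, 0, 0, -1),
   (-1, 0, 0, 1), (-1, 0, -1, 0), (0, -1, 1, 0), (0, -1, 0, -1), (0, -1, 0, 1), (0, -1, -1, 0)]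

def s0 : List Z4 := [(2,0,0,0), (0,-2,0,0), (0,0,-2,0), (1,1,-1,1)]
def s1 : List Z4 := [(2,0,0,0), (0,-2,0,0), (0,0,-2,0), (1,1,-1,1), (0,0,0,2), (1,-1,1,1),
   (0,0,0,-2), (-2,0,0,0), (-1,-1,-1,1), (1,-1,-1,-1), (-1,1,-1,-1), (-1,1,-1,1)]

lemma d1 : ∀ x ∈ tset2, ∀ y ∈ tset2, ∃ z ∈ tset2, qmul x y = dbl z := by decide
lemma dTO : ∀ x ∈ tset2, ∀ y ∈ oset1, ∃ z ∈ oset1, qmul x y = dbl z := by decide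
lemma dOT : ∀ x ∈ oset1, ∀ y ∈ tset2, ∃ z ∈ oset1, qmul x y = dbl z := by decide
lemma dOO : ∀ x ∈ oset1, ∀ y ∈ oset1, qmul x y ∈ tset2 := by decide
lemma dtau2 : ∀ x ∈ tset2, ∃ z ∈ oset1, qmul x (1,1,0,0) = dbl z := by decide
lemma dtau3 : ∀ z ∈ oset1, ∃ x ∈ tset2, qmul x (1,1,0,0) = dbl z := by decide
lemma dSolve : ∀ q ∈ oset1, ∃ Z ∈ tset2, qmul (1,1,0,0) Z = dbl q := by decide
lemma ds1 : ∀ z ∈ s1, ∃ a ∈ s0, ∃ b ∈ s0, qmul a b = dbl z := by decide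
lemma dgen : ∀ p ∈ tset2, ∃ a ∈ s1, ∃ b ∈ s1, ∃ z ∈ tset2,
    qmul a b = dbl z ∧ ∃ c ∈ s1, qmul z c = dbl p := by decide
lemma dTconj : ∀ x ∈ tset2, conjq x ∈ tset2 := by decide
lemma dOconj : ∀ x ∈ oset1, conjq x ∈ oset1 := by decide
lemma dX1 : ∀ X ∈ tset2, X.1 = 0 ∨ X.1 = 1 ∨ X.1 = -1 ∨ X.1 = 2 ∨ X.1 = -2 := by decide
lemma dq1 : ∀ q ∈ oset1, q.1 = 0 ∨ q.1 = 1 ∨ q.1 = -1 := by decide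
lemma dOnz : ∀ q ∈ oset1, q.1 ≠ 0 ∨ q.2.1 ≠ 0 ∨ q.2.2.1 ≠ 0 ∨ q.2.2.2 ≠ 0 := by decide

lemma sqrt2_irr (m n : ℤ) (hn : n ≠ 0) : Real.sqrt 2 * (n:ℝ) ≠ (m:ℝ) := by
  intro h
  have h2 : Real.sqrt 2 = (m:ℝ)/(n:ℝ) := by
    rw [eq_div_iff (by exact_mod_cast hn)]; exact h
  have := irrational_sqrt_two
  rw [irrational_iff_ne_rational] at this
  exact this m n hn h2

lemma no_irr {qi Xi : ℤ} (hq : qi ≠ 0) (e : (Real.sqrt 2)⁻¹ * (qi:ℝ) = (Xi:ℝ)/2) : False := by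
  have hs : (0:ℝ) < Real.sqrt 2 := Real.sqrt_pos.mpr (by norm_num)
  have hmul : Real.sqrt 2 * (Real.sqrt 2)⁻¹ = 1 := mul_inv_cancel₀ (ne_of_gt hs)
  have h2 : (qi:ℝ) = Real.sqrt 2 * (Xi:ℝ)/2 := by
    have := congrArg (fun t => Real.sqrt 2 * t) e
    rw [← mul_assoc, hmul, one_mul] at this
    linarith
  by_cases hXi : Xi = 0
  · subst hXi; simp at h2; exact hq (by exact_mod_cast h2)
  · exact sqrt2_irr (2*qi) Xi hXi (by push_cast; linarith)

lemma twoT_eq : twoT = {M | ∃ X ∈ tset2, M = qmatH X} := by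
  ext M
  constructor
  · intro hM
    simp only [twoT, Set.mem_union] at hM
    rcases hM with h | h
    · simp only [Set.mem_insert_iff, Set.mem_singleton_iff] at h
      rcases h with rfl|rfl|rfl|rfl|rfl|rfl|rfl|rfl
      · exact ⟨(2,0,0,0), by decide, qmat_congr (by norm_num) (by norm_num) (by norm_num) (by norm_num)⟩
      · exact ⟨(-2,0,0,0), by decide, qmat_congr (by norm_num) (by norm_num) (by norm_num) (by norm_num)⟩
      · exact ⟨(0,2,0,0), by decide, qmat_congr (by norm_num) (by norm_num) (by norm_num) (by norm_num)⟩
      · exact ⟨(0,-2,0,0), by decide, qmat_congr (by norm_num) (by norm_num) (by norm_num) (by norm_num)⟩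
      · exact ⟨(0,0,2,0), by decide, qmat_congr (by norm_num) (by norm_num) (by norm_num) (by norm_num)⟩
      · exact ⟨(0,0,-2,0), by decide, qmat_congr (by norm_num) (by norm_num) (by norm_num) (by norm_num)⟩
      · exact ⟨(0,0,0,2), by decide, qmat_congr (by norm_num) (by norm_num) (by norm_num) (by norm_num)⟩
      · exact ⟨(0,0,0,-2), by decide, qmat_congr (by norm_num) (by norm_num) (by norm_num) (by norm_num)⟩
    · obtain ⟨a, b, c, d, ha, hb, hc, hd, rfl⟩ := h
      rcases ha with rfl | rfl
      · rcases hb with rfl | rfl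
        · rcases hc with rfl | rfl
          · rcases hd with rfl | rfl
            · exact ⟨(1,1,1,1), by decide, qmat_congr (by norm_num) (by norm_num) (by norm_num) (by norm_num)⟩
            · exact ⟨(1,1,1,-1), by decide, qmat_congr (by norm_num) (by norm_num) (by norm_num) (by norm_num)⟩
          · rcases hd with rfl | rfl
            · exact ⟨(1,1,-1,1), by decide, qmat_congr (by norm_num) (by norm_num) (by norm_num) (by norm_num)⟩
            · exact ⟨(1,1,-1,-1), by decide, qmat_congr (by norm_num) (by norm_num) (by norm_num) (by norm_num)⟩
        · rcases hc with rfl | rfl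
          · rcases hd with rfl | rfl
            · exact ⟨(1,-1,1,1), by decide, qmat_congr (by norm_num) (by norm_num) (by norm_num) (by norm_num)⟩
            · exact ⟨(1,-1,1,-1), by decide, qmat_congr (by norm_num) (by norm_num) (by norm_num) (by norm_num)⟩
          · rcases hd with rfl | rfl
            · exact ⟨(1,-1,-1,1), by decide, qmat_congr (by norm_num) (by norm_num) (by norm_num) (by norm_num)⟩
            · exact ⟨(1,-1,-1,-1), by decide, qmat_congr (by norm_num) (by norm_num) (by norm_num) (by norm_num)⟩
      · rcases hb with rfl | rfl
        · rcases hc with rfl | rfl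
          · rcases hd with rfl | rfl
            · exact ⟨(-1,1,1,1), by decide, qmat_congr (by norm_num) (by norm_num) (by norm_num) (by norm_num)⟩
            · exact ⟨(-1,1,1,-1), by decide, qmat_congr (by norm_num) (by norm_num) (by norm_num) (by norm_num)⟩
          · rcases hd with rfl | rfl
            · exact ⟨(-1,1,-1,1), by decide, qmat_congr (by norm_num) (by norm_num) (by norm_num) (by norm_num)⟩
            · exact ⟨(-1,1,-1,-1), by decide, qmat_congr (by norm_num) (by norm_num) (by norm_num) (by norm_num)⟩
        · rcases hc with rfl | rfl
          · rcases hd with rfl | rfl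
            · exact ⟨(-1,-1,1,1), by decide, qmat_congr (by norm_num) (by norm_num) (by norm_num) (by norm_num)⟩
            · exact ⟨(-1,-1,1,-1), by decide, qmat_congr (by norm_num) (by norm_num) (by norm_num) (by norm_num)⟩
          · rcases hd with rfl | rfl
            · exact ⟨(-1,-1,-1,1), by decide, qmat_congr (by norm_num) (by norm_num) (by norm_num) (by norm_num)⟩
            · exact ⟨(-1,-1,-1,-1), by decide, qmat_congr (by norm_num) (by norm_num) (by norm_num) (by norm_num)⟩
  · rintro ⟨X, hX, rfl⟩
    fin_cases hX
    · refine Set.mem_union_left _ ?_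
      rw [show qmatH (2,0,0,0) = qmat (1) (0) (0) (0) from qmat_congr (by norm_num) (by norm_num) (by norm_num) (by norm_num)]
      simp
    · refine Set.mem_union_left _ ?_
      rw [show qmatH (-2,0,0,0) = qmat (-1) (0) (0) (0) from qmat_congr (by norm_num) (by norm_num) (by norm_num) (by norm_num)]
      simp
    · refine Set.mem_union_left _ ?_
      rw [show qmatH (0,2,0,0) = qmat (0) (1) (0) (0) from qmat_congr (by norm_num) (by norm_num) (by norm_num) (by norm_num)]
      simp
    · refine Set.mem_union_left _ ?_
      rw [show qmatH (0,-2,0,0) = qmat (0) (-1) (0) (0) from qmat_congr (by norm_num) (by norm_num) (by norm_num) (by norm_num)]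
      simp
    · refine Set.mem_union_left _ ?_
      rw [show qmatH (0,0,2,0) = qmat (0) (0) (1) (0) from qmat_congr (by norm_num) (by norm_num) (by norm_num) (by norm_num)]
      simp
    · refine Set.mem_union_left _ ?_
      rw [show qmatH (0,0,-2,0) = qmat (0) (0) (-1) (0) from qmat_congr (by norm_num) (by norm_num) (by norm_num) (by norm_num)]
      simp
    · refine Set.mem_union_left _ ?_
      rw [show qmatH (0,0,0,2) = qmat (0) (0) (0) (1) from qmat_congr (by norm_num) (by norm_num) (by norm_num) (by norm_num)]
      simp
    · refine Set.mem_union_left _ ?_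
      rw [show qmatH (0,0,0,-2) = qmat (0) (0) (0) (-1) from qmat_congr (by norm_num) (by norm_num) (by norm_num) (by norm_num)]
      simp
    · refine Set.mem_union_right _ ⟨1/2, 1/2, 1/2, 1/2, Or.inl rfl, Or.inl rfl, Or.inl rfl, Or.inl rfl, qmat_congr (by norm_num) (by norm_num) (by norm_num) (by norm_num)⟩
    · refine Set.mem_union_right _ ⟨1/2, 1/2, 1/2, -(1/2), Or.inl rfl, Or.inl rfl, Or.inl rfl, Or.inr rfl, qmat_congr (by norm_num) (by norm_num) (by norm_num) (by norm_num)⟩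
    · refine Set.mem_union_right _ ⟨1/2, 1/2, -(1/2), 1/2, Or.inl rfl, Or.inl rfl, Or.inr rfl, Or.inl rfl, qmat_congr (by norm_num) (by norm_num) (by norm_num) (by norm_num)⟩
    · refine Set.mem_union_right _ ⟨1/2, 1/2, -(1/2), -(1/2), Or.inl rfl, Or.inl rfl, Or.inr rfl, Or.inr rfl, qmat_congr (by norm_num) (by norm_num) (by norm_num) (by norm_num)⟩
    · refine Set.mem_union_right _ ⟨1/2, -(1/2), 1/2, 1/2, Or.inl rfl, Or.inr rfl, Or.inl rfl, Or.inl rfl, qmat_congr (by norm_num) (by norm_num) (by norm_num) (by norm_num)⟩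
    · refine Set.mem_union_right _ ⟨1/2, -(1/2), 1/2, -(1/2), Or.inl rfl, Or.inr rfl, Or.inl rfl, Or.inr rfl, qmat_congr (by norm_num) (by norm_num) (by norm_num) (by norm_num)⟩
    · refine Set.mem_union_right _ ⟨1/2, -(1/2), -(1/2), 1/2, Or.inl rfl, Or.inr rfl, Or.inr rfl, Or.inl rfl, qmat_congr (by norm_num) (by norm_num) (by norm_num) (by norm_num)⟩
    · refine Set.mem_union_right _ ⟨1/2, -(1/2), -(1/2), -(1/2), Or.inl rfl, Or.inr rfl, Or.inr rfl, Or.inr rfl, qmat_congr (by norm_num) (by norm_num) (by norm_num) (by norm_num)⟩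
    · refine Set.mem_union_right _ ⟨-(1/2), 1/2, 1/2, 1/2, Or.inr rfl, Or.inl rfl, Or.inl rfl, Or.inl rfl, qmat_congr (by norm_num) (by norm_num) (by norm_num) (by norm_num)⟩
    · refine Set.mem_union_right _ ⟨-(1/2), 1/2, 1/2, -(1/2), Or.inr rfl, Or.inl rfl, Or.inl rfl, Or.inr rfl, qmat_congr (by norm_num) (by norm_num) (by norm_num) (by norm_num)⟩
    · refine Set.mem_union_right _ ⟨-(1/2), 1/2, -(1/2), 1/2, Or.inr rfl, Or.inl rfl, Or.inr rfl, Or.inl rfl, qmat_congr (by norm_num) (by norm_num) (by norm_num) (by norm_num)⟩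
    · refine Set.mem_union_right _ ⟨-(1/2), 1/2, -(1/2), -(1/2), Or.inr rfl, Or.inl rfl, Or.inr rfl, Or.inr rfl, qmat_congr (by norm_num) (by norm_num) (by norm_num) (by norm_num)⟩
    · refine Set.mem_union_right _ ⟨-(1/2), -(1/2), 1/2, 1/2, Or.inr rfl, Or.inr rfl, Or.inl rfl, Or.inl rfl, qmat_congr (by norm_num) (by norm_num) (by norm_num) (by norm_num)⟩
    · refine Set.mem_union_right _ ⟨-(1/2), -(1/2), 1/2, -(1/2), Or.inr rfl, Or.inr rfl, Or.inl rfl, Or.inr rfl, qmat_congr (by norm_num) (by norm_num) (by norm_num) (by norm_num)⟩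
    · refine Set.mem_union_right _ ⟨-(1/2), -(1/2), -(1/2), 1/2, Or.inr rfl, Or.inr rfl, Or.inr rfl, Or.inl rfl, qmat_congr (by norm_num) (by norm_num) (by norm_num) (by norm_num)⟩
    · refine Set.mem_union_right _ ⟨-(1/2), -(1/2), -(1/2), -(1/2), Or.inr rfl, Or.inr rfl, Or.inr rfl, Or.inr rfl, qmat_congr (by norm_num) (by norm_num) (by norm_num) (by norm_num)⟩

lemma SmEq : qmat (Real.sqrt 2)⁻¹ (Real.sqrt 2)⁻¹ 0 0 = qmatO (1,1,0,0) :=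
  qmat_congr (by norm_num) (by norm_num) (by norm_num [qmatO]) (by norm_num)

lemma twoO_iff (M : Matrix (Fin 2) (Fin 2) ℂ) :
    M ∈ twoO ↔ (∃ X ∈ tset2, M = qmatH X) ∨ (∃ q ∈ oset1, M = qmatO q) := by
  constructor
  · intro h
    rcases (Set.mem_union _ _ _).mp h with h | h
    · left; rwa [twoT_eq] at h
    · right
      obtain ⟨A, hA, rfl⟩ := h
      rw [twoT_eq] at hA
      obtain ⟨X, hX, rfl⟩ := hA
      obtain ⟨z, hz, hzz⟩ := dtau2 X hX
      exact ⟨z, hz, by simp only; rw [SmEq]; exact mulHO hzz⟩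
  · rintro (⟨X, hX, rfl⟩ | ⟨q, hq, rfl⟩)
    · exact Set.mem_union_left _ (by rw [twoT_eq]; exact ⟨X, hX, rfl⟩)
    · refine Set.mem_union_right _ ?_
      obtain ⟨X, hX, hXz⟩ := dtau3 q hq
      exact ⟨qmatH X, by rw [twoT_eq]; exact ⟨X, hX, rfl⟩, by simp only; rw [SmEq]; exact mulHO hXz⟩

lemma notT : ∀ q ∈ oset1, qmatO q ∉ twoT := by
  intro q hq hmem
  rw [twoT_eq] at hmem
  obtain ⟨X, hX, hEq⟩ := hmem
  have h4 := qmat_inj (show qmat _ _ _ _ = qmat _ _ _ _ from hEq)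
  rcases dOnz q hq with h | h | h | h
  · exact no_irr h h4.1
  · exact no_irr h h4.2.1
  · exact no_irr h h4.2.2.1
  · exact no_irr h h4.2.2.2

lemma su3_mul {u v : ℂ} (hu : u ≠ 0) (hv : v ≠ 0) (A B : Matrix (Fin 2) (Fin 2) ℂ) :
    su3block u A * su3block v B = su3block (u*v) (A*B) := by
  ext i j
  fin_cases i <;> fin_cases j <;>
    simp [su3block, Matrix.mul_apply, Fin.sum_univ_three, Fin.sum_univ_two,
      Matrix.vecHead, Matrix.vecTail, mul_inv] <;> ring

lemma su3_star (u : ℂ) (A : Matrix (Fin 2) (Fin 2) ℂ) :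
    star (su3block u A) = su3block ((starRingEnd ℂ) u) (star A) := by
  ext i j
  fin_cases i <;> fin_cases j <;>
    simp [su3block, Matrix.conjTranspose_apply, _root_.map_pow, _root_.map_inv₀,
      Matrix.vecHead, Matrix.vecTail]

lemma su3_one : su3block 1 (1 : Matrix (Fin 2) (Fin 2) ℂ) = 1 := by
  ext i j
  fin_cases i <;> fin_cases j <;>
    simp [su3block, Matrix.one_apply, Matrix.vecHead, Matrix.vecTail]

lemma su3_trace (u : ℂ) (A : Matrix (Fin 2) (Fin 2) ℂ) :
    (su3block u A).trace = u^2 + u⁻¹ * A.trace := by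
  simp [Matrix.trace_fin_three, su3block, Matrix.trace_fin_two, Matrix.vecHead, Matrix.vecTail]
  ring

lemma su3_det {u : ℂ} (hu : u ≠ 0) (A : Matrix (Fin 2) (Fin 2) ℂ) :
    (su3block u A).det = A.det := by
  simp [Matrix.det_fin_three, su3block, Matrix.det_fin_two, Matrix.vecHead, Matrix.vecTail]
  field_simp

lemma su3_mem_unitary {u : ℂ} (hu : u * (starRingEnd ℂ) u = 1)
    {A : Matrix (Fin 2) (Fin 2) ℂ} (hA : A ∈ Matrix.unitaryGroup (Fin 2) ℂ) :
    su3block u A ∈ Matrix.unitaryGroup (Fin 3) ℂ := by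
  have hune : u ≠ 0 := by intro h; rw [h] at hu; simp at hu
  have hcne : (starRingEnd ℂ) u ≠ 0 := by intro h; rw [h] at hu; simp at hu
  rw [Matrix.mem_unitaryGroup_iff]
  rw [su3_star, su3_mul hune hcne, hu, (Matrix.mem_unitaryGroup_iff).mp hA, su3_one]

lemma unit_of_pow {u : ℂ} {n : ℕ} (hn : n ≠ 0) (h : u ^ n = 1) : u * (starRingEnd ℂ) u = 1 := by
  have habs : ‖u‖ ^ n = 1 := by rw [← norm_pow, h, norm_one]
  have h0 : ‖u‖ = 1 := by
    rcases lt_trichotomy ‖u‖ 1 with hlt | heq | hgt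
    · exact absurd habs (by have := pow_lt_one₀ (norm_nonneg u) hlt hn; linarith)
    · exact heq
    · exact absurd habs (by have := one_lt_pow₀ hgt hn; linarith)
  rw [Complex.mul_conj]
  norm_cast
  rw [← Complex.sq_norm, h0]; norm_num

lemma normSq_one_of {u : ℂ} (h : u * (starRingEnd ℂ) u = 1) : u.re^2 + u.im^2 = 1 := by
  have h2 := Complex.mul_conj u
  rw [h] at h2
  have : Complex.normSq u = 1 := by exact_mod_cast h2.symm
  rw [Complex.normSq_apply] at this
  nlinarith [this]

lemma ne_zero_of_unit {u : ℂ} (h : u * (starRingEnd ℂ) u = 1) : u ≠ 0 := by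
  intro h0; rw [h0] at h; simp at h

lemma conj_eq_inv {u : ℂ} (h : u * (starRingEnd ℂ) u = 1) : (starRingEnd ℂ) u = u⁻¹ :=
  eq_inv_of_mul_eq_one_right h

lemma unit_mul {u v : ℂ} (hu : u * (starRingEnd ℂ) u = 1) (hv : v * (starRingEnd ℂ) v = 1) :
    (u*v) * (starRingEnd ℂ) (u*v) = 1 := by
  rw [_root_.map_mul]; ring_nf; calc u * v * (starRingEnd ℂ) u * (starRingEnd ℂ) v
      = (u * (starRingEnd ℂ) u) * (v * (starRingEnd ℂ) v) := by ring
    _ = 1 := by rw [hu, hv, one_mul]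

lemma absSq_trace {u : ℂ} (t : ℝ) (hu : u * (starRingEnd ℂ) u = 1) :
    ‖u^2 + u⁻¹ * (t:ℂ)‖ ^ 2 = 1 + t^2 + 2*t*(u^3).re := by
  have hne : u ≠ 0 := ne_zero_of_unit hu
  have hconj : (starRingEnd ℂ) u = u⁻¹ := conj_eq_inv hu
  have key := Complex.add_conj (u^3)
  have expand : (u^2 + u⁻¹*(t:ℂ)) * (starRingEnd ℂ) (u^2 + u⁻¹*(t:ℂ))
      = 1 + (t:ℂ)^2 + (t:ℂ)*(u^3 + (starRingEnd ℂ) (u^3)) := by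
    simp only [_root_.map_add, _root_.map_mul, _root_.map_pow, _root_.map_inv₀, Complex.conj_ofReal, hconj, inv_inv]
    field_simp
    ring
  have hmc := Complex.mul_conj (u^2 + u⁻¹*(t:ℂ))
  rw [expand, key] at hmc
  push_cast at hmc
  rw [Complex.sq_norm]
  have hfin : ((1 + t^2 + 2*t*(u^3).re : ℝ) : ℂ) = (Complex.normSq (u^2 + u⁻¹*(t:ℂ)) : ℂ) := by
    push_cast
    linear_combination hmc
  exact_mod_cast hfin.symm

lemma K1 {w : ℂ} (hu : w * (starRingEnd ℂ) w = 1) (m : ℤ) (h : 2 * w.re = (m:ℝ)) :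
    w^4 = 1 ∨ w^6 = 1 := by
  have hc := Complex.add_conj w
  rw [h] at hc
  have hq : w^2 - ((m:ℝ):ℂ)*w + 1 = 0 := by linear_combination w * hc - hu
  have habs := normSq_one_of hu
  have hb : w.re^2 ≤ 1 := by nlinarith [sq_nonneg w.im]
  have hb1 : -2 ≤ m := by
    have : (-2 : ℝ) ≤ (m:ℝ) := by nlinarith [sq_nonneg (2*w.re + 2)]
    exact_mod_cast this
  have hb2 : m ≤ 2 := by
    have : (m:ℝ) ≤ 2 := by nlinarith [sq_nonneg (2*w.re - 2)]
    exact_mod_cast this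
  interval_cases m <;> push_cast at hq
  · left
    have h1 : (w + 1)^2 = 0 := by linear_combination hq
    have h2 : w = -1 := by
      have := pow_eq_zero_iff (n := 2) (by norm_num) |>.mp h1
      linear_combination this
    rw [h2]; norm_num
  · right; linear_combination (w^4 - w^3 + w - 1) * hq
  · left; linear_combination (w^2 - 1) * hq
  · right; linear_combination (w^4 + w^3 - w - 1) * hq
  · left
    have h1 : (w - 1)^2 = 0 := by linear_combination hq
    have h2 : w = 1 := by
      have := pow_eq_zero_iff (n := 2) (by norm_num) |>.mp h1
      linear_combination this
    rw [h2]; norm_num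

lemma sq_ne_two (m : ℤ) : m^2 ≠ 2 := by
  intro h
  have h1 : m ≤ 1 := by nlinarith
  have h2 : -1 ≤ m := by nlinarith
  interval_cases m <;> norm_num at h
lemma sq_ne_six (m : ℤ) : m^2 ≠ 6 := by
  intro h
  have h1 : m ≤ 2 := by nlinarith
  have h2 : -2 ≤ m := by nlinarith
  interval_cases m <;> norm_num at h
lemma sq_ne_eight (m : ℤ) : m^2 ≠ 8 := by
  intro h
  have h1 : m ≤ 2 := by nlinarith
  have h2 : -2 ≤ m := by nlinarith
  interval_cases m <;> norm_num at h

lemma K2 {w : ℂ} (hu : w * (starRingEnd ℂ) w = 1) (m d : ℤ)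
    (h : 2 * Real.sqrt 2 * w.re = (m:ℝ)) (h2 : 2 * (w^2).re = (d:ℝ)) :
    w^2 = -1 ∨ w^4 = -1 := by
  have hn := normSq_one_of hu
  have hre2 : (w^2).re = 2*w.re^2 - 1 := by
    rw [sq]; rw [Complex.mul_re]; nlinarith [hn]
  have hs2 : Real.sqrt 2 ^ 2 = 2 := Real.sq_sqrt (by norm_num)
  have hmd : m^2 = 2*d + 4 := by
    have : ((m:ℝ))^2 = 2*(d:ℝ) + 4 := by
      rw [← h, ← h2]; nlinarith [hs2, hre2]
    exact_mod_cast this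
  have hd1 : -2 ≤ d := by
    have : (-2:ℝ) ≤ (d:ℝ) := by rw [← h2]; nlinarith [sq_nonneg w.re, sq_nonneg w.im, hn]
    exact_mod_cast this
  have hd2 : d ≤ 2 := by
    have : (d:ℝ) ≤ 2 := by rw [← h2]; nlinarith [sq_nonneg w.im, hn]
    exact_mod_cast this
  have hnsq : (w^2).re^2 + (w^2).im^2 = 1 := by
    refine normSq_one_of ?_
    calc w^2 * (starRingEnd ℂ) (w^2) = (w * (starRingEnd ℂ) w)^2 := by rw [_root_.map_pow]; ring
      _ = 1 := by rw [hu]; norm_num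
  interval_cases d
  · -- d = -2 : w² = -1
    left
    have hre : (w^2).re = -1 := by
      have : 2*(w^2).re = ((-2:ℤ):ℝ) := h2
      push_cast at this; linarith
    have him : (w^2).im = 0 := by nlinarith [hnsq, hre]
    apply Complex.ext <;> simp [hre, him]
  · exact absurd hmd (by intro hh; exact sq_ne_two m (by omega))
  · -- d = 0 : w⁴ = -1
    right
    have hre : (w^2).re = 0 := by
      have : 2*(w^2).re = ((0:ℤ):ℝ) := h2
      push_cast at this; linarith
    have him : (w^2).im^2 = 1 := by nlinarith [hnsq]
    have : w^4 = (w^2)*(w^2) := by ring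
    rw [this]
    apply Complex.ext
    · rw [Complex.mul_re, hre]; simp; nlinarith [him]
    · rw [Complex.mul_im, hre]; simp
  · exact absurd hmd (by intro hh; exact sq_ne_six m (by omega))
  · exact absurd hmd (by intro hh; exact sq_ne_eight m (by omega))

lemma K3 {w : ℂ} (h : w^4 = 1) : w.re = 0 ∨ w.re = 1 ∨ w.re = -1 := by
  have : (w^2 - 1) * (w^2 + 1) = 0 := by linear_combination h
  rcases mul_eq_zero.mp this with h1 | h1
  · have h2 : (w-1)*(w+1) = 0 := by linear_combination h1
    rcases mul_eq_zero.mp h2 with h3 | h3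
    · right; left; rw [show w = 1 from by linear_combination h3]; simp
    · right; right; rw [show w = -1 from by linear_combination h3]; simp
  · left
    have h2 : w^2 = -1 := by linear_combination h1
    have hre := congrArg Complex.re h2
    have him := congrArg Complex.im h2
    rw [sq, Complex.mul_re] at hre
    rw [sq, Complex.mul_im] at him
    simp at hre him
    rcases mul_eq_zero.mp (by linarith [him] : w.re * w.im = 0) with h4 | h4
    · exact h4
    · exfalso; rw [h4] at hre; nlinarith [sq_nonneg w.re]

lemma K4 {w : ℂ} (hu : w * (starRingEnd ℂ) w = 1) (h : w^4 = -1) : w.re^2 = 1/2 := by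
  have hn := normSq_one_of hu
  have h2 : (w^2).re = 0 := by
    have hsq : (w^2)*(w^2) = -1 := by linear_combination h
    have hre := congrArg Complex.re hsq
    have him := congrArg Complex.im hsq
    rw [Complex.mul_re] at hre
    rw [Complex.mul_im] at him
    simp at hre him
    rcases mul_eq_zero.mp (by linarith [him] : (w^2).re * (w^2).im = 0) with h4 | h4
    · exact h4
    · exfalso; rw [h4] at hre; nlinarith [sq_nonneg (w^2).re]
  have hx : (w^2).re = 2*w.re^2 - 1 := by
    rw [sq, Complex.mul_re]; nlinarith [hn]
  rw [h2] at hx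
  linarith


lemma eQ_pow (q : ℚ) (n : ℕ) : eQ q ^ n = eQ (n * q) := by
  rw [eQ, eQ, ← Complex.exp_nat_mul]; congr 1; push_cast; ring

lemma eQ_one : eQ 1 = 1 := by
  rw [eQ, show (2*(Real.pi:ℂ)*Complex.I*((1:ℚ):ℂ)) = 2*(Real.pi:ℂ)*Complex.I by push_cast; ring]
  exact Complex.exp_two_pi_mul_I

lemma eQ_half : eQ (1/2) = -1 := by
  rw [eQ, show (2*(Real.pi:ℂ)*Complex.I*((1/2:ℚ):ℂ)) = (Real.pi:ℂ)*Complex.I by push_cast; ring]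
  exact Complex.exp_pi_mul_I

lemma eQ_re (q : ℚ) : (eQ q).re = Real.cos (2*Real.pi*(q:ℝ)) := by
  rw [eQ, show (2*(Real.pi:ℂ)*Complex.I*((q:ℚ):ℂ)) = ((2*Real.pi*(q:ℝ) : ℝ):ℂ)*Complex.I by
    push_cast; ring]
  exact Complex.exp_ofReal_mul_I_re _

lemma zeta3 : eQ (1/3)^3 = 1 := by
  rw [eQ_pow, show ((3:ℕ):ℚ)*(1/3) = 1 by norm_num, eQ_one]

lemma zeta_re : (eQ (1/3)).re = -(1/2) := by
  rw [eQ_re, show 2*Real.pi*((1/3:ℚ):ℝ) = Real.pi - Real.pi/3 by push_cast; ring,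
    Real.cos_pi_sub, Real.cos_pi_div_three]

lemma zeta_ne_one : eQ (1/3) ≠ 1 := by
  intro h
  have := zeta_re
  rw [h] at this
  simp at this
  norm_num at this

lemma zeta_sum : eQ (1/3)^2 + eQ (1/3) + 1 = 0 := by
  have h := zeta3
  have : (eQ (1/3) - 1) * (eQ (1/3)^2 + eQ (1/3) + 1) = 0 := by linear_combination h
  rcases mul_eq_zero.mp this with h1 | h1
  · exact absurd (by linear_combination h1) zeta_ne_one
  · exact h1

lemma cube_roots {u ζ : ℂ} (hζ3 : ζ^3 = 1) (hζ : ζ^2 + ζ + 1 = 0) (h : u^3 = 1) :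
    u = 1 ∨ u = ζ ∨ u = ζ^2 := by
  have hfac : (u - 1)*(u - ζ)*(u - ζ^2) = 0 := by
    linear_combination h + (u - u^2) * hζ + (u - 1) * hζ3
  rcases mul_eq_zero.mp hfac with h1 | h1
  · rcases mul_eq_zero.mp h1 with h2 | h2
    · left; linear_combination h2
    · right; left; linear_combination h2
  · right; right; linear_combination h1

-- m2 / m3 glue
lemma m2_mul (x y : G2) : m2 (x*y) = m2 x * m2 y := rfl
lemma m2_one : m2 1 = 1 := rfl
lemma m2_inv (x : G2) : m2 x⁻¹ = star (m2 x) := by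
  have h1 : ((x⁻¹ : G2) : ↥UG2) = ((x : ↥UG2))⁻¹ := rfl
  rw [m2, h1, ← Unitary.star_eq_inv, Unitary.coe_star]; rfl
lemma m2_injective : Function.Injective m2 := fun x y h => Subtype.ext (Subtype.ext h)

lemma m3_mul (x y : G3) : m3 (x*y) = m3 x * m3 y := rfl
lemma m3_one : m3 1 = 1 := rfl
lemma m3_inv (x : G3) : m3 x⁻¹ = star (m3 x) := by
  have h1 : ((x⁻¹ : G3) : ↥UG3) = ((x : ↥UG3))⁻¹ := rfl
  rw [m3, h1, ← Unitary.star_eq_inv, Unitary.coe_star]; rfl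
lemma m3_injective : Function.Injective m3 := fun x y h => Subtype.ext (Subtype.ext h)

lemma mem_SU3_of {M : Matrix (Fin 3) (Fin 3) ℂ} (hM : M ∈ UG3) (hdet : M.det = 1) :
    (⟨M, hM⟩ : ↥UG3) ∈ SU3 := by
  simp only [SU3, MonoidHom.mem_ker, MonoidHom.comp_apply]
  rw [show ((Matrix.detMonoidHom) (UG3.subtype ⟨M, hM⟩) : ℂ) = M.det from rfl]
  exact hdet

-- unitary ℂ glue
lemma ucoe_unit (a : ↥(unitary ℂ)) : (a:ℂ) * (starRingEnd ℂ) (a:ℂ) = 1 := by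
  have := (Unitary.mem_iff.mp a.prop).2
  rwa [Complex.star_def] at this

lemma ucoe_inv (a : ↥(unitary ℂ)) : ((a⁻¹ : ↥(unitary ℂ)) : ℂ) = (a : ℂ)⁻¹ := by
  rw [← Unitary.star_eq_inv, Unitary.coe_star, Complex.star_def]
  exact (by
    have h := ucoe_unit a
    exact eq_inv_of_mul_eq_one_right h)

lemma conj_one_map (H : Subgroup G3) :
    Subgroup.map (MulAut.conj (1:G3)).toMonoidHom H = H := by
  have h1 : MulAut.conj (1:G3) = 1 := _root_.map_one _
  rw [h1]
  have h2 : (1 : MulAut G3).toMonoidHom = MonoidHom.id G3 := rfl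
  rw [h2, Subgroup.map_id]

lemma closure_carrier {s : Set (Matrix (Fin 3) (Fin 3) ℂ)} (H : Subgroup G3)
    (h : {x : G3 | m3 x ∈ s} = ↑H) : sgOf s = H := by
  rw [sgOf, h, Subgroup.closure_eq]

lemma qmat_one : qmat 1 0 0 0 = 1 := by
  ext i j; fin_cases i <;> fin_cases j <;>
    simp [qmat, Matrix.one_apply, Matrix.vecHead, Matrix.vecTail]

lemma qmat_negone : qmat (-1) 0 0 0 = -1 := by
  ext i j; fin_cases i <;> fin_cases j <;>
    simp [qmat, Matrix.one_apply, Matrix.neg_apply, Matrix.vecHead, Matrix.vecTail]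

lemma qmatH_one : qmatH (2,0,0,0) = 1 :=
  (qmat_congr (by norm_num) (by norm_num) (by norm_num) (by norm_num) :
    qmatH (2,0,0,0) = qmat 1 0 0 0).trans qmat_one

lemma qmatH_negone : qmatH (-2,0,0,0) = -1 :=
  (qmat_congr (by norm_num) (by norm_num) (by norm_num) (by norm_num) :
    qmatH (-2,0,0,0) = qmat (-1) 0 0 0).trans qmat_negone

lemma trH (X : Z4) : (qmatH X).trace = ((X.1 : ℝ) : ℂ) := by
  rw [qmatH, qmat_trace]; push_cast; ring

lemma trO (q : Z4) : (qmatO q).trace = ((Real.sqrt 2 * (q.1 : ℝ) : ℝ) : ℂ) := by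
  rw [qmatO, qmat_trace]
  have hs : Real.sqrt 2 * Real.sqrt 2 = 2 := Real.mul_self_sqrt (by norm_num)
  have h' : (Real.sqrt 2)⁻¹ * 2 = Real.sqrt 2 := by
    have hne : Real.sqrt 2 ≠ 0 := by positivity
    field_simp <;> linarith [hs]
  have hr : 2 * ((Real.sqrt 2)⁻¹ * (q.1:ℝ)) = Real.sqrt 2 * (q.1:ℝ) := by
    calc 2 * ((Real.sqrt 2)⁻¹ * (q.1:ℝ)) = ((Real.sqrt 2)⁻¹ * 2) * (q.1:ℝ) := by ring
      _ = Real.sqrt 2 * (q.1:ℝ) := by rw [h']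
  exact_mod_cast congrArg (fun t : ℝ => (t : ℂ)) hr

lemma trS : (qmatO (1,1,0,0)).trace = ((Real.sqrt 2 : ℝ) : ℂ) := by
  rw [trO]; norm_num

lemma BO_one (m : ℕ) : (1 : Matrix (Fin 3) (Fin 3) ℂ) ∈ BO m := by
  refine ⟨1, one_pow _, qmatH (2,0,0,0), (twoO_iff _).mpr (Or.inl ⟨_, by decide, rfl⟩),
    Or.inl ⟨by rw [twoT_eq]; exact ⟨_, by decide, rfl⟩, one_pow _⟩, ?_⟩
  rw [qmatH_one, su3_one]

lemma BO12_mul {M N : Matrix (Fin 3) (Fin 3) ℂ} (hM : M ∈ BO 12) (hN : N ∈ BO 12) :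
    M * N ∈ BO 12 := by
  obtain ⟨u, hu, A, hAO, hfA, rfl⟩ := hM
  obtain ⟨v, hv, B, hBO, hfB, rfl⟩ := hN
  have hune : u ≠ 0 := ne_zero_of_unit (unit_of_pow (by norm_num) hu)
  have hvne : v ≠ 0 := ne_zero_of_unit (unit_of_pow (by norm_num) hv)
  rw [su3_mul hune hvne]
  have huv : (u*v)^(2*12) = 1 := by rw [mul_pow, hu, hv, one_mul]
  rcases hfA with ⟨hAT, hu12⟩ | ⟨hAT, hu12⟩ <;> rcases hfB with ⟨hBT, hv12⟩ | ⟨hBT, hv12⟩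
  · -- T T
    rw [twoT_eq] at hAT hBT
    obtain ⟨X, hX, rfl⟩ := hAT
    obtain ⟨Y, hY, rfl⟩ := hBT
    obtain ⟨z, hz, hzz⟩ := d1 X hX Y hY
    rw [mulHH hzz]
    exact ⟨u*v, huv, qmatH z, (twoO_iff _).mpr (Or.inl ⟨z, hz, rfl⟩),
      Or.inl ⟨by rw [twoT_eq]; exact ⟨z, hz, rfl⟩, by rw [mul_pow, hu12, hv12, one_mul]⟩, rfl⟩
  · -- T O
    rw [twoT_eq] at hAT
    obtain ⟨X, hX, rfl⟩ := hAT
    rcases (twoO_iff _).mp hBO with ⟨Y, hY, rfl⟩ | ⟨q, hq, rfl⟩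
    · exact absurd (by rw [twoT_eq]; exact ⟨Y, hY, rfl⟩) hBT
    obtain ⟨z, hz, hzz⟩ := dTO X hX q hq
    rw [mulHO hzz]
    exact ⟨u*v, huv, qmatO z, (twoO_iff _).mpr (Or.inr ⟨z, hz, rfl⟩),
      Or.inr ⟨notT z hz, by rw [mul_pow, hu12, hv12, one_mul]⟩, rfl⟩
  · -- O T
    rw [twoT_eq] at hBT
    obtain ⟨Y, hY, rfl⟩ := hBT
    rcases (twoO_iff _).mp hAO with ⟨X, hX, rfl⟩ | ⟨q, hq, rfl⟩
    · exact absurd (by rw [twoT_eq]; exact ⟨X, hX, rfl⟩) hAT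
    obtain ⟨z, hz, hzz⟩ := dOT q hq Y hY
    rw [mulOH hzz]
    exact ⟨u*v, huv, qmatO z, (twoO_iff _).mpr (Or.inr ⟨z, hz, rfl⟩),
      Or.inr ⟨notT z hz, by rw [mul_pow, hu12, hv12, mul_one]⟩, rfl⟩
  · -- O O
    rcases (twoO_iff _).mp hAO with ⟨X, hX, rfl⟩ | ⟨q, hq, rfl⟩
    · exact absurd (by rw [twoT_eq]; exact ⟨X, hX, rfl⟩) hAT
    rcases (twoO_iff _).mp hBO with ⟨Y, hY, rfl⟩ | ⟨q', hq', rfl⟩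
    · exact absurd (by rw [twoT_eq]; exact ⟨Y, hY, rfl⟩) hBT
    rw [mulOO rfl]
    exact ⟨u*v, huv, qmatH (qmul q q'), (twoO_iff _).mpr (Or.inl ⟨_, dOO q hq q' hq', rfl⟩),
      Or.inl ⟨by rw [twoT_eq]; exact ⟨_, dOO q hq q' hq', rfl⟩,
        by rw [mul_pow, hu12, hv12]; norm_num⟩, rfl⟩

lemma BO12_star {M : Matrix (Fin 3) (Fin 3) ℂ} (hM : M ∈ BO 12) : star M ∈ BO 12 := by
  obtain ⟨u, hu, A, hAO, hfA, rfl⟩ := hM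
  rw [su3_star]
  have hcu : ((starRingEnd ℂ) u)^(2*12) = 1 := by rw [← _root_.map_pow, hu, _root_.map_one]
  rcases hfA with ⟨hAT, hu12⟩ | ⟨hAT, hu12⟩
  · rw [twoT_eq] at hAT
    obtain ⟨X, hX, rfl⟩ := hAT
    rw [starH]
    exact ⟨_, hcu, qmatH (conjq X), (twoO_iff _).mpr (Or.inl ⟨_, dTconj X hX, rfl⟩),
      Or.inl ⟨by rw [twoT_eq]; exact ⟨_, dTconj X hX, rfl⟩,
        by rw [← _root_.map_pow, hu12, _root_.map_one]⟩, rfl⟩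
  · rcases (twoO_iff _).mp hAO with ⟨X, hX, rfl⟩ | ⟨q, hq, rfl⟩
    · exact absurd (by rw [twoT_eq]; exact ⟨X, hX, rfl⟩) hAT
    rw [starO]
    refine ⟨_, hcu, qmatO (conjq q), (twoO_iff _).mpr (Or.inr ⟨_, dOconj q hq, rfl⟩),
      Or.inr ⟨notT _ (dOconj q hq), ?_⟩, rfl⟩
    rw [← _root_.map_pow, hu12]
    simp

set_option maxHeartbeats 1000000 in
theorem statement13 (Ht : Subgroup (↥(unitary ℂ) × G2)) (hfin : Finite ↥Ht)
    (hneg : ∃ x ∈ Ht, (x.1 : ℂ) = -1 ∧ m2 x.2 = -1)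
    (hzeta : ∃ x ∈ Ht, (x.1 : ℂ) = eQ (1/3) ∧ m2 x.2 = 1)
    (hproj : (fun p : ↥(unitary ℂ) × G2 => m2 p.2) '' (Ht : Set _) = twoO)
    (H : Subgroup G3)
    (hH : m3 '' (H : Set G3) = piMat '' (Ht : Set _))
    (hrrc : RRC H) :
    (IsConjSub H (sgOf (BO 6)) ∨ IsConjSub H (sgOf (BO 12))) ∧
    ¬ ∃ g : G3, Subgroup.map (MulAut.conj g).toMonoidHom (sgOf (BO 6)) ≤
      sgOf (BO 12) := by
  classical
  have hs2 : Real.sqrt 2 ^ 2 = 2 := Real.sq_sqrt (by norm_num)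
  have hsqne : Real.sqrt 2 ≠ 0 := by positivity
  -- hproj directions
  have projO : ∀ x ∈ Ht, m2 x.2 ∈ twoO := by
    intro x hx; rw [← hproj]; exact ⟨x, hx, rfl⟩
  have lift : ∀ M ∈ twoO, ∃ x ∈ Ht, m2 x.2 = M := by
    intro M hM; rw [← hproj] at hM
    obtain ⟨x, hx, hxx⟩ := hM
    exact ⟨x, hx, hxx⟩
  -- RRC key inequality
  have key : ∀ x ∈ Ht, ∀ t : ℝ, (m2 x.2).trace = (t:ℂ) →
      ∃ k : ℤ, 1 + t^2 + 2*t*(((x.1 : ℂ))^3).re = (k:ℝ) := by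
    intro x hx t ht
    have hmem : piMat x ∈ m3 '' (H : Set G3) := by rw [hH]; exact ⟨x, hx, rfl⟩
    obtain ⟨h0, hh0, hm⟩ := hmem
    obtain ⟨k, hk⟩ := hrrc h0 hh0
    refine ⟨k, ?_⟩
    rw [hm, piMat, su3_trace, ht, absSq_trace t (ucoe_unit x.1)] at hk
    exact hk
  -- commutators
  have comm_mem : ∀ p q : ↥(unitary ℂ) × G2, p ∈ Ht → q ∈ Ht →
      (p * q * p⁻¹ * q⁻¹) ∈ Ht ∧ ((p * q * p⁻¹ * q⁻¹).1 : ℂ) = 1 ∧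
      m2 (p * q * p⁻¹ * q⁻¹).2 = m2 p.2 * m2 q.2 * star (m2 p.2) * star (m2 q.2) := by
    intro p q hp hq
    refine ⟨mul_mem (mul_mem (mul_mem hp hq) (inv_mem hp)) (inv_mem hq), ?_, ?_⟩
    · show ((p.1 * q.1 * p.1⁻¹ * q.1⁻¹ : ↥(unitary ℂ)) : ℂ) = 1
      rw [mul_comm p.1 q.1]
      rw [show q.1 * p.1 * p.1⁻¹ * q.1⁻¹ = 1 by group]
      simp
    · show m2 (p.2 * q.2 * p.2⁻¹ * q.2⁻¹) = _
      rw [m2_mul, m2_mul, m2_mul, m2_inv, m2_inv]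
  -- lifts of the basic 2O elements
  obtain ⟨xj, hxj, hxjm⟩ := lift (qmatH (0,0,2,0))
    ((twoO_iff _).mpr (Or.inl ⟨_, by decide, rfl⟩))
  obtain ⟨xk, hxk, hxkm⟩ := lift (qmatH (0,0,0,2))
    ((twoO_iff _).mpr (Or.inl ⟨_, by decide, rfl⟩))
  obtain ⟨xS, hxS, hxSm⟩ := lift (qmatO (1,1,0,0))
    ((twoO_iff _).mpr (Or.inr ⟨_, by decide, rfl⟩))
  obtain ⟨xT, hxT, hxTm⟩ := lift (qmatO (1,0,1,0))
    ((twoO_iff _).mpr (Or.inr ⟨_, by decide, rfl⟩))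
  -- base elements of the (1,g) machinery
  have base : ∀ w ∈ s0, ∃ x ∈ Ht, ((x.1 : ℂ) = 1 ∧ m2 x.2 = qmatH w) := by
    intro w hw
    have hw4 : w = (2,0,0,0) ∨ w = (0,-2,0,0) ∨ w = (0,0,-2,0) ∨ w = (1,1,-1,1) := by
      simpa [s0] using hw
    rcases hw4 with rfl | rfl | rfl | rfl
    · exact ⟨1, one_mem _, by simp, by rw [show (1 : ↥(unitary ℂ) × G2).2 = 1 from rfl, m2_one, qmatH_one]⟩
    · -- -i = [j, S]
      obtain ⟨hmem, hf, hm⟩ := comm_mem xj xS hxj hxS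
      rw [hxjm, hxSm, starH, starO,
        show conjq (0,0,2,0) = ((0,0,-2,0) : Z4) from rfl,
        show conjq (1,1,0,0) = ((1,-1,0,0) : Z4) from rfl,
        mulHO (show qmul (0,0,2,0) (1,1,0,0) = dbl (0,0,1,-1) by decide),
        mulOH (show qmul (0,0,1,-1) (0,0,-2,0) = dbl (1,-1,0,0) by decide),
        mulOO (show qmul (1,-1,0,0) (1,-1,0,0) = ((0,-2,0,0) : Z4) by decide)] at hm
      exact ⟨_, hmem, hf, hm⟩
    · -- -j = [k, Tj]
      obtain ⟨hmem, hf, hm⟩ := comm_mem xk xT hxk hxT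
      rw [hxkm, hxTm, starH, starO,
        show conjq (0,0,0,2) = ((0,0,0,-2) : Z4) from rfl,
        show conjq (1,0,1,0) = ((1,0,-1,0) : Z4) from rfl,
        mulHO (show qmul (0,0,0,2) (1,0,1,0) = dbl (0,-1,0,1) by decide),
        mulOH (show qmul (0,-1,0,1) (0,0,0,-2) = dbl (1,0,-1,0) by decide),
        mulOO (show qmul (1,0,-1,0) (1,0,-1,0) = ((0,0,-2,0) : Z4) by decide)] at hm
      exact ⟨_, hmem, hf, hm⟩
    · -- ω' = [S, Tj]
      obtain ⟨hmem, hf, hm⟩ := comm_mem xS xT hxS hxT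
      rw [hxSm, hxTm, starO, starO,
        show conjq (1,1,0,0) = ((1,-1,0,0) : Z4) from rfl,
        show conjq (1,0,1,0) = ((1,0,-1,0) : Z4) from rfl,
        mulOO (show qmul (1,1,0,0) (1,0,1,0) = ((1,1,1,1) : Z4) by decide),
        mulHO (show qmul (1,1,1,1) (1,-1,0,0) = dbl (1,0,0,1) by decide),
        mulOO (show qmul (1,0,0,1) (1,0,-1,0) = ((1,1,-1,1) : Z4) by decide)] at hm
      exact ⟨_, hmem, hf, hm⟩
  have hs1T : ∀ z ∈ s1, ∃ x ∈ Ht, ((x.1 : ℂ) = 1 ∧ m2 x.2 = qmatH z) := by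
    intro z hz
    obtain ⟨a, ha, b, hb, hab⟩ := ds1 z hz
    obtain ⟨xa, hxa, hfa, hma⟩ := base a ha
    obtain ⟨xb, hxb, hfb, hmb⟩ := base b hb
    refine ⟨xa * xb, mul_mem hxa hxb, ?_, ?_⟩
    · show ((xa.1 * xb.1 : ↥(unitary ℂ)) : ℂ) = 1
      push_cast [hfa, hfb]
      simp [hfa, hfb]
    · show m2 (xa.2 * xb.2) = _
      rw [m2_mul, hma, hmb, mulHH hab]
  have hPT : ∀ X ∈ tset2, ∃ x ∈ Ht, ((x.1 : ℂ) = 1 ∧ m2 x.2 = qmatH X) := by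
    intro X hX
    obtain ⟨a, ha, b, hb, z, hzt, hab, c, hc, hzc⟩ := dgen X hX
    obtain ⟨xa, hxa, hfa, hma⟩ := hs1T a ha
    obtain ⟨xb, hxb, hfb, hmb⟩ := hs1T b hb
    obtain ⟨xc, hxc, hfc, hmc⟩ := hs1T c hc
    refine ⟨xa * xb * xc, mul_mem (mul_mem hxa hxb) hxc, ?_, ?_⟩
    · show ((xa.1 * xb.1 * xc.1 : ↥(unitary ℂ)) : ℂ) = 1
      push_cast [hfa, hfb, hfc]
      simp [hfa, hfb, hfc]
    · show m2 (xa.2 * xb.2 * xc.2) = _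
      rw [m2_mul, m2_mul, hma, hmb, hmc, mulHH hab, mulHH hzc]
  -- the scalar subgroup C
  set Cs : Set ℂ := {u | ∃ x ∈ Ht, ((x.1 : ℂ) = u ∧ x.2 = 1)} with hCsdef
  have hCunit : ∀ u ∈ Cs, u * (starRingEnd ℂ) u = 1 := by
    rintro u ⟨x, hx, h1, h2⟩
    rw [← h1]; exact ucoe_unit x.1
  have hCmul : ∀ u v, u ∈ Cs → v ∈ Cs → u * v ∈ Cs := by
    rintro u v ⟨x, hx, h1, h2⟩ ⟨y, hy, h3, h4⟩
    refine ⟨x * y, mul_mem hx hy, ?_, ?_⟩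
    · show ((x.1 * y.1 : ↥(unitary ℂ)) : ℂ) = u * v
      push_cast [h1, h3]
      ring
    · show x.2 * y.2 = 1
      rw [h2, h4, one_mul]
  have hC1 : (1:ℂ) ∈ Cs := ⟨1, one_mem _, by simp, rfl⟩
  have hCz : eQ (1/3) ∈ Cs := by
    obtain ⟨x, hx, h1, h2⟩ := hzeta
    exact ⟨x, hx, h1, m2_injective (by rw [h2, m2_one])⟩
  have hCneg : (-1:ℂ) ∈ Cs := by
    obtain ⟨x, hx, h1, h2⟩ := hneg
    obtain ⟨y, hy, hyf, hym⟩ := hPT (-2,0,0,0) (by decide)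
    have hx2 : x.2 = y.2 := m2_injective (by rw [h2, hym, qmatH_negone])
    refine ⟨x * y⁻¹, mul_mem hx (inv_mem hy), ?_, ?_⟩
    · show ((x.1 * y.1⁻¹ : ↥(unitary ℂ)) : ℂ) = -1
      push_cast [ucoe_inv, h1, hyf]
      simp [ucoe_inv, h1, hyf]
    · show x.2 * y.2⁻¹ = 1
      rw [hx2, mul_inv_cancel]
  have hCmu6 : ∀ u : ℂ, u^6 = 1 → u ∈ Cs := by
    intro u hu6
    have h2 : (u^3 - 1) * (u^3 + 1) = 0 := by linear_combination hu6
    rcases mul_eq_zero.mp h2 with h | h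
    · rcases cube_roots zeta3 zeta_sum (by linear_combination h) with rfl | rfl | rfl
      · exact hC1
      · exact hCz
      · exact (by rw [sq]; exact hCmul _ _ hCz hCz)
    · have h3 : (-u)^3 = 1 := by linear_combination -h
      rcases cube_roots zeta3 zeta_sum h3 with hh | hh | hh
      · rw [show u = -1 by linear_combination -hh]; exact hCneg
      · rw [show u = (-1) * eQ (1/3) by linear_combination -hh]
        exact hCmul _ _ hCneg hCz
      · rw [show u = (-1) * (eQ (1/3) * eQ (1/3)) by linear_combination -hh]
        exact hCmul _ _ hCneg (hCmul _ _ hCz hCz)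
  have memC_of : ∀ x, x ∈ Ht → (∃ X ∈ tset2, m2 x.2 = qmatH X) → (x.1 : ℂ) ∈ Cs := by
    rintro x hx ⟨X, hX, hm⟩
    obtain ⟨y, hy, hyf, hym⟩ := hPT X hX
    have hx2 : x.2 = y.2 := m2_injective (by rw [hm, hym])
    refine ⟨x * y⁻¹, mul_mem hx (inv_mem hy), ?_, ?_⟩
    · show ((x.1 * y.1⁻¹ : ↥(unitary ℂ)) : ℂ) = (x.1 : ℂ)
      push_cast [ucoe_inv, hyf]
      simp [ucoe_inv, hyf]
    · show x.2 * y.2⁻¹ = 1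
      rw [hx2, mul_inv_cancel]
  -- the S-scalar
  set s : ℂ := ((xS.1 : ℂ)) with hsdef
  have hsunit : s * (starRingEnd ℂ) s = 1 := ucoe_unit xS.1
  have hsne : s ≠ 0 := ne_zero_of_unit hsunit
  have hs2C : s^2 ∈ Cs := by
    have := memC_of (xS * xS) (mul_mem hxS hxS)
      ⟨(0,2,0,0), by decide, by
        show m2 (xS.2 * xS.2) = _
        rw [m2_mul, hxSm, mulOO (show qmul (1,1,0,0) (1,1,0,0) = ((0,2,0,0):Z4) by decide)]⟩
    have hcoe : (((xS * xS).1 : ↥(unitary ℂ)) : ℂ) = s^2 := by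
      show ((xS.1 * xS.1 : ↥(unitary ℂ)) : ℂ) = s^2
      push_cast
      ring
    rwa [hcoe] at this
  -- constraints
  have con1 : ∀ u ∈ Cs, ∃ m : ℤ, 2*((u^3).re) = (m:ℝ) := by
    rintro u ⟨xu, hxu, hxuf, hxus⟩
    obtain ⟨y, hy, hyf, hym⟩ := hPT (1,1,-1,1) (by decide)
    have hel := mul_mem hxu hy
    have hfst : (((xu * y).1 : ↥(unitary ℂ)) : ℂ) = u := by
      show ((xu.1 * y.1 : ↥(unitary ℂ)) : ℂ) = u
      push_cast [hxuf, hyf]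
      simp [hxuf, hyf]
    have htr : (m2 ((xu * y).2)).trace = ((1:ℝ):ℂ) := by
      show (m2 (xu.2 * y.2)).trace = _
      rw [m2_mul, hxus, m2_one, one_mul, hym, trH]
      norm_num
    obtain ⟨k, hk⟩ := key _ hel 1 htr
    rw [hfst] at hk
    refine ⟨k - 2, ?_⟩
    push_cast
    linarith [hk]
  have con2 : ∀ u ∈ Cs, ∃ m : ℤ, 2*Real.sqrt 2*(((s*u)^3).re) = (m:ℝ) := by
    rintro u ⟨xu, hxu, hxuf, hxus⟩
    have hel := mul_mem hxS hxu
    have hfst : (((xS * xu).1 : ↥(unitary ℂ)) : ℂ) = s * u := by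
      show ((xS.1 * xu.1 : ↥(unitary ℂ)) : ℂ) = s * u
      rw [hsdef]
      push_cast [hxuf]
      ring
    have htr : (m2 ((xS * xu).2)).trace = ((Real.sqrt 2:ℝ):ℂ) := by
      show (m2 (xS.2 * xu.2)).trace = _
      rw [m2_mul, hxus, m2_one, mul_one, hxSm, trS]
    obtain ⟨k, hk⟩ := key _ hel (Real.sqrt 2) htr
    rw [hfst] at hk
    refine ⟨k - 3, ?_⟩
    push_cast
    nlinarith [hk, hs2]
  -- the Q dichotomy
  have hQ : ∀ u ∈ Cs, ((s*u)^3)^2 = -1 ∨ ((s*u)^3)^4 = -1 := by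
    intro u hu
    obtain ⟨m, hm⟩ := con2 u hu
    have hs2u2 : s^2*u^2 ∈ Cs := by
      have := hCmul _ _ hs2C (hCmul _ _ hu hu)
      rwa [show u*u = u^2 by ring] at this
    obtain ⟨d, hd⟩ := con1 _ hs2u2
    have hdd : 2*((((s*u)^3)^2).re) = (d:ℝ) := by
      rw [show ((s*u)^3)^2 = (s^2*u^2)^3 by ring]; exact hd
    have hwu : ((s*u)^3) * (starRingEnd ℂ) ((s*u)^3) = 1 := by
      have h1 := unit_mul hsunit (hCunit u hu)
      calc (s*u)^3 * (starRingEnd ℂ) ((s*u)^3) = ((s*u) * (starRingEnd ℂ) (s*u))^3 := by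
            rw [_root_.map_pow]; ring
        _ = 1 := by rw [h1, one_pow]
    exact K2 hwu m d hm hdd
  -- order facts
  have hsu24 : ∀ u ∈ Cs, (s*u)^24 = 1 := by
    intro u hu
    rcases hQ u hu with h | h
    · calc (s*u)^24 = (((s*u)^3)^2)^4 := by ring
        _ = 1 := by rw [h]; norm_num
    · calc (s*u)^24 = (((s*u)^3)^4)^2 := by ring
        _ = 1 := by rw [h]; norm_num
  have hs24 : s^24 = 1 := by
    have := hsu24 1 hC1
    rwa [mul_one] at this
  have hC24 : ∀ u ∈ Cs, u^24 = 1 := by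
    intro u hu
    have h1 := hsu24 u hu
    rw [mul_pow, hs24, one_mul] at h1
    exact h1
  have hCpow12 : ∀ u ∈ Cs, u^12 = 1 := by
    intro u hu
    obtain ⟨m, hm⟩ := con1 u hu
    have hu3 : (u^3) * (starRingEnd ℂ) (u^3) = 1 := by
      have h0 := hCunit u hu
      calc u^3 * (starRingEnd ℂ) (u^3) = (u * (starRingEnd ℂ) u)^3 := by rw [_root_.map_pow]; ring
        _ = 1 := by rw [h0, one_pow]
    rcases K1 hu3 m hm with h | h
    · rw [← pow_mul] at h; exact h
    · rw [← pow_mul] at h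
      have h24 := hC24 u hu
      have hune : u ≠ 0 := ne_zero_of_unit (hCunit u hu)
      have h6 : u^6 = 1 := by
        have : u^24 = u^18 * u^6 := by ring
        rw [h24, h] at this
        linear_combination -this
      calc u^12 = (u^6)^2 := by ring
        _ = 1 := by rw [h6]; norm_num
  -- ====== case analysis ======
  constructor
  · -- part 1
    by_cases hcase : ∀ u ∈ Cs, u^6 = 1
    · -- C = μ₆ : BO 6
      left
      have hs6 : s^6 = -1 := by
        rcases hQ 1 hC1 with h | h
        · rw [mul_one] at h
          calc s^6 = (s^3)^2 := by ring
            _ = -1 := h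
        · exfalso
          rw [mul_one] at h
          have h12 : s^12 = 1 := by
            have h6 := hcase _ hs2C
            calc s^12 = (s^2)^6 := by ring
              _ = 1 := h6
          have hcon : s^12 = -1 := by
            calc s^12 = ((s^3))^4 := by ring
              _ = -1 := h
          rw [h12] at hcon
          norm_num at hcon
      have himg : piMat '' (Ht : Set _) = BO 6 := by
        apply Set.Subset.antisymm
        · rintro M ⟨x, hx, rfl⟩
          rcases (twoO_iff _).mp (projO x hx) with ⟨X, hX, hm⟩ | ⟨q, hq, hm⟩
          · have hu : (x.1 : ℂ) ∈ Cs := memC_of x hx ⟨X, hX, hm⟩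
            have h6 := hcase _ hu
            refine ⟨(x.1:ℂ), ?_, m2 x.2, (twoO_iff _).mpr (Or.inl ⟨X, hX, hm⟩),
              Or.inl ⟨by rw [twoT_eq]; exact ⟨X, hX, hm⟩, h6⟩, rfl⟩
            calc (x.1:ℂ)^(2*6) = ((x.1:ℂ)^6)^2 := by ring
              _ = 1 := by rw [h6]; norm_num
          · have hprod := mul_mem hx (inv_mem hxS)
            have hm2 : m2 ((x * xS⁻¹).2) = qmatH (qmul q (1,-1,0,0)) := by
              show m2 (x.2 * xS.2⁻¹) = _
              rw [m2_mul, m2_inv, hm, hxSm, starO,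
                show conjq (1,1,0,0) = ((1,-1,0,0):Z4) from rfl, mulOO rfl]
            have hv : ((x * xS⁻¹).1 : ℂ) ∈ Cs :=
              memC_of _ hprod ⟨_, dOO q hq (1,-1,0,0) (by decide), hm2⟩
            have hvc : ((x * xS⁻¹).1 : ℂ) = (x.1:ℂ) * s⁻¹ := by
              show ((x.1 * xS.1⁻¹ : ↥(unitary ℂ)) : ℂ) = _
              rw [hsdef]
              push_cast [ucoe_inv]
              ring
            rw [hvc] at hv
            have h6v := hcase _ hv
            have hu6 : (x.1:ℂ)^6 = -1 := by
              have h1 : ((x.1:ℂ) * s⁻¹)^6 = 1 := h6v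
              field_simp at h1
              rw [h1, hs6]
            refine ⟨(x.1:ℂ), ?_, m2 x.2, (twoO_iff _).mpr (Or.inr ⟨q, hq, hm⟩),
              Or.inr ⟨by rw [hm]; exact notT q hq, hu6⟩, rfl⟩
            calc (x.1:ℂ)^(2*6) = ((x.1:ℂ)^6)^2 := by ring
              _ = 1 := by rw [hu6]; norm_num
        · rintro M ⟨u, hu12, A, hAO, hflag, rfl⟩
          rcases hflag with ⟨hAT, hu6⟩ | ⟨hAT, hu6⟩
          · rw [twoT_eq] at hAT
            obtain ⟨X, hX, rfl⟩ := hAT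
            obtain ⟨xu, hxu, hxuf, hxus⟩ := hCmu6 u hu6
            obtain ⟨y, hy, hyf, hym⟩ := hPT X hX
            refine ⟨xu * y, mul_mem hxu hy, ?_⟩
            show su3block (((xu * y).1 : ↥(unitary ℂ)) : ℂ) (m2 ((xu * y).2)) = _
            have e1 : (((xu * y).1 : ↥(unitary ℂ)) : ℂ) = u := by
              show ((xu.1 * y.1 : ↥(unitary ℂ)) : ℂ) = u
              push_cast [hxuf, hyf]
              simp [hxuf, hyf]
            have e2 : m2 ((xu * y).2) = qmatH X := by
              show m2 (xu.2 * y.2) = _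
              rw [m2_mul, hxus, m2_one, one_mul, hym]
            rw [e1, e2]
          · rcases (twoO_iff _).mp hAO with ⟨X, hX, rfl⟩ | ⟨q, hq, rfl⟩
            · exact absurd (by rw [twoT_eq]; exact ⟨X, hX, rfl⟩) hAT
            have hv6 : (u * s⁻¹)^6 = 1 := by
              field_simp
              rw [hu6, hs6]
            obtain ⟨xv, hxv, hxvf, hxvs⟩ := hCmu6 _ hv6
            obtain ⟨Z, hZ, hZq⟩ := dSolve q hq
            obtain ⟨y, hy, hyf, hym⟩ := hPT Z hZ
            refine ⟨xv * (xS * y), mul_mem hxv (mul_mem hxS hy), ?_⟩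
            show su3block (((xv * (xS * y)).1 : ↥(unitary ℂ)) : ℂ) (m2 ((xv * (xS * y)).2)) = _
            have e1 : (((xv * (xS * y)).1 : ↥(unitary ℂ)) : ℂ) = u := by
              have hsplit : ((xv.1 * (xS.1 * y.1) : ↥(unitary ℂ)) : ℂ)
                  = (xv.1:ℂ) * ((xS.1:ℂ) * (y.1:ℂ)) := by push_cast; ring
              show ((xv.1 * (xS.1 * y.1) : ↥(unitary ℂ)) : ℂ) = u
              rw [hsplit, hxvf, hyf, mul_one, ← hsdef, inv_mul_cancel_right₀ hsne]
            have e2 : m2 ((xv * (xS * y)).2) = qmatO q := by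
              show m2 (xv.2 * (xS.2 * y.2)) = _
              rw [m2_mul, m2_mul, hxvs, m2_one, one_mul, hxSm, hym, mulOH hZq]
            rw [e1, e2]
      refine ⟨1, ?_⟩
      rw [conj_one_map]
      refine (closure_carrier H ?_).symm
      ext x
      simp only [Set.mem_setOf_eq, SetLike.mem_coe]
      constructor
      · intro hx
        rw [← himg, ← hH] at hx
        obtain ⟨h0, hh0, hm⟩ := hx
        rwa [← m3_injective hm]
      · intro hx
        rw [← himg, ← hH]
        exact ⟨x, hx, rfl⟩
    · -- C = μ₁₂ : BO 12
      right
      push_neg at hcase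
      obtain ⟨v0, hv0C, hv06⟩ := hcase
      have hv012 : v0^12 = 1 := hCpow12 v0 hv0C
      have hv06' : v0^6 = -1 := by
        have h2 : (v0^6 - 1) * (v0^6 + 1) = 0 := by linear_combination hv012
        rcases mul_eq_zero.mp h2 with h | h
        · exact absurd (by linear_combination h) hv06
        · linear_combination h
      have hv0ne : v0 ≠ 0 := ne_zero_of_unit (hCunit _ hv0C)
      have hCmu12 : ∀ u : ℂ, u^12 = 1 → u ∈ Cs := by
        intro u hu12
        have h2 : (u^6 - 1) * (u^6 + 1) = 0 := by linear_combination hu12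
        rcases mul_eq_zero.mp h2 with h | h
        · exact hCmu6 u (by linear_combination h)
        · have h6 : (u * v0⁻¹)^6 = 1 := by
            field_simp
            rw [show u^6 = -1 by linear_combination h, hv06']
          have hmem := hCmu6 _ h6
          have := hCmul _ _ hmem hv0C
          rwa [inv_mul_cancel_right₀ hv0ne] at this
      have hs12 : s^12 = -1 := by
        rcases hQ 1 hC1 with h | h
        · exfalso
          rw [mul_one] at h
          have hs6 : s^6 = -1 := by
            calc s^6 = (s^3)^2 := by ring
              _ = -1 := h
          have hs12' : s^12 = 1 := by
            calc s^12 = (s^6)^2 := by ring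
              _ = 1 := by rw [hs6]; norm_num
          obtain ⟨xs', hxs', hxsf, hxss⟩ := hCmu12 s hs12'
          have hel := mul_mem (inv_mem hxs') hxS
          have hfst : (((xs'⁻¹ * xS).1 : ↥(unitary ℂ)) : ℂ) = 1 := by
            show ((xs'.1⁻¹ * xS.1 : ↥(unitary ℂ)) : ℂ) = 1
            push_cast [ucoe_inv, hxsf]
            field_simp [ucoe_inv, hxsf]
            exact hsdef.symm
          have htr : (m2 ((xs'⁻¹ * xS).2)).trace = ((Real.sqrt 2:ℝ):ℂ) := by
            show (m2 (xs'.2⁻¹ * xS.2)).trace = _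
            rw [hxss, inv_one, one_mul, hxSm, trS]
          obtain ⟨k, hk⟩ := key _ hel (Real.sqrt 2) htr
          rw [hfst] at hk
          simp only [one_pow, Complex.one_re] at hk
          refine sqrt2_irr (k - 3) 2 (by norm_num) ?_
          push_cast
          nlinarith [hk, hs2]
        · rw [mul_one] at h
          calc s^12 = (s^3)^4 := by ring
            _ = -1 := h
      have hs12ne : s^12 ≠ 1 := by rw [hs12]; norm_num
      have himg : piMat '' (Ht : Set _) = BO 12 := by
        apply Set.Subset.antisymm
        · rintro M ⟨x, hx, rfl⟩
          rcases (twoO_iff _).mp (projO x hx) with ⟨X, hX, hm⟩ | ⟨q, hq, hm⟩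
          · have hu : (x.1 : ℂ) ∈ Cs := memC_of x hx ⟨X, hX, hm⟩
            have h12 := hCpow12 _ hu
            refine ⟨(x.1:ℂ), ?_, m2 x.2, (twoO_iff _).mpr (Or.inl ⟨X, hX, hm⟩),
              Or.inl ⟨by rw [twoT_eq]; exact ⟨X, hX, hm⟩, h12⟩, rfl⟩
            calc (x.1:ℂ)^(2*12) = ((x.1:ℂ)^12)^2 := by ring
              _ = 1 := by rw [h12]; norm_num
          · have hprod := mul_mem hx (inv_mem hxS)
            have hm2 : m2 ((x * xS⁻¹).2) = qmatH (qmul q (1,-1,0,0)) := by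
              show m2 (x.2 * xS.2⁻¹) = _
              rw [m2_mul, m2_inv, hm, hxSm, starO,
                show conjq (1,1,0,0) = ((1,-1,0,0):Z4) from rfl, mulOO rfl]
            have hv : ((x * xS⁻¹).1 : ℂ) ∈ Cs :=
              memC_of _ hprod ⟨_, dOO q hq (1,-1,0,0) (by decide), hm2⟩
            have hvc : ((x * xS⁻¹).1 : ℂ) = (x.1:ℂ) * s⁻¹ := by
              show ((x.1 * xS.1⁻¹ : ↥(unitary ℂ)) : ℂ) = _
              rw [hsdef]
              push_cast [ucoe_inv]
              ring
            rw [hvc] at hv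
            have h12v := hCpow12 _ hv
            have hu12 : (x.1:ℂ)^12 = -1 := by
              have h1 : ((x.1:ℂ) * s⁻¹)^12 = 1 := h12v
              field_simp at h1
              rw [h1, hs12]
            refine ⟨(x.1:ℂ), ?_, m2 x.2, (twoO_iff _).mpr (Or.inr ⟨q, hq, hm⟩),
              Or.inr ⟨by rw [hm]; exact notT q hq, hu12⟩, rfl⟩
            calc (x.1:ℂ)^(2*12) = ((x.1:ℂ)^12)^2 := by ring
              _ = 1 := by rw [hu12]; norm_num
        · rintro M ⟨u, hu24, A, hAO, hflag, rfl⟩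
          rcases hflag with ⟨hAT, hu12⟩ | ⟨hAT, hu12⟩
          · rw [twoT_eq] at hAT
            obtain ⟨X, hX, rfl⟩ := hAT
            obtain ⟨xu, hxu, hxuf, hxus⟩ := hCmu12 u hu12
            obtain ⟨y, hy, hyf, hym⟩ := hPT X hX
            refine ⟨xu * y, mul_mem hxu hy, ?_⟩
            show su3block (((xu * y).1 : ↥(unitary ℂ)) : ℂ) (m2 ((xu * y).2)) = _
            have e1 : (((xu * y).1 : ↥(unitary ℂ)) : ℂ) = u := by
              show ((xu.1 * y.1 : ↥(unitary ℂ)) : ℂ) = u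
              push_cast [hxuf, hyf]
              simp [hxuf, hyf]
            have e2 : m2 ((xu * y).2) = qmatH X := by
              show m2 (xu.2 * y.2) = _
              rw [m2_mul, hxus, m2_one, one_mul, hym]
            rw [e1, e2]
          · rcases (twoO_iff _).mp hAO with ⟨X, hX, rfl⟩ | ⟨q, hq, rfl⟩
            · exact absurd (by rw [twoT_eq]; exact ⟨X, hX, rfl⟩) hAT
            have hune : u ≠ 0 := by
              intro h0
              rw [h0] at hu12
              norm_num at hu12
            have hv12 : (u * s⁻¹)^12 = 1 := by
              field_simp
              rw [hu12, hs12]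
            obtain ⟨xv, hxv, hxvf, hxvs⟩ := hCmu12 _ hv12
            obtain ⟨Z, hZ, hZq⟩ := dSolve q hq
            obtain ⟨y, hy, hyf, hym⟩ := hPT Z hZ
            refine ⟨xv * (xS * y), mul_mem hxv (mul_mem hxS hy), ?_⟩
            show su3block (((xv * (xS * y)).1 : ↥(unitary ℂ)) : ℂ) (m2 ((xv * (xS * y)).2)) = _
            have e1 : (((xv * (xS * y)).1 : ↥(unitary ℂ)) : ℂ) = u := by
              have hsplit : ((xv.1 * (xS.1 * y.1) : ↥(unitary ℂ)) : ℂ)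
                  = (xv.1:ℂ) * ((xS.1:ℂ) * (y.1:ℂ)) := by push_cast; ring
              show ((xv.1 * (xS.1 * y.1) : ↥(unitary ℂ)) : ℂ) = u
              rw [hsplit, hxvf, hyf, mul_one, ← hsdef, inv_mul_cancel_right₀ hsne]
            have e2 : m2 ((xv * (xS * y)).2) = qmatO q := by
              show m2 (xv.2 * (xS.2 * y.2)) = _
              rw [m2_mul, m2_mul, hxvs, m2_one, one_mul, hxSm, hym, mulOH hZq]
            rw [e1, e2]
      refine ⟨1, ?_⟩
      rw [conj_one_map]
      refine (closure_carrier H ?_).symm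
      ext x
      simp only [Set.mem_setOf_eq, SetLike.mem_coe]
      constructor
      · intro hx
        rw [← himg, ← hH] at hx
        obtain ⟨h0, hh0, hm⟩ := hx
        rwa [← m3_injective hm]
      · intro hx
        rw [← himg, ← hH]
        exact ⟨x, hx, rfl⟩
  · -- part 2 : non-conjugacy
    rintro ⟨g, hg⟩
    -- the element x₀
    have hu0_12 : (eQ (1/12))^12 = 1 := by
      rw [eQ_pow, show ((12:ℕ):ℚ) * (1/12) = 1 by norm_num, eQ_one]
    have hu0_6 : (eQ (1/12))^6 = -1 := by
      rw [eQ_pow, show ((6:ℕ):ℚ) * (1/12) = 1/2 by norm_num, eQ_half]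
    have hu0u : (eQ (1/12)) * (starRingEnd ℂ) (eQ (1/12)) = 1 :=
      unit_of_pow (by norm_num : (12:ℕ) ≠ 0) hu0_12
    have hu0ne : eQ (1/12) ≠ 0 := ne_zero_of_unit hu0u
    have hA0mem : qmatO (1,1,0,0) ∈ Matrix.unitaryGroup (Fin 2) ℂ := by
      rw [Matrix.mem_unitaryGroup_iff]
      rw [starO, show conjq (1,1,0,0) = ((1,-1,0,0):Z4) from rfl,
        mulOO (show qmul (1,1,0,0) (1,-1,0,0) = ((2,0,0,0):Z4) by decide), qmatH_one]
    have hM0U : su3block (eQ (1/12)) (qmatO (1,1,0,0)) ∈ UG3 :=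
      su3_mem_unitary hu0u hA0mem
    have hM0det : (su3block (eQ (1/12)) (qmatO (1,1,0,0))).det = 1 := by
      rw [su3_det hu0ne, qmatO, qmat_det]
      have hone : ((Real.sqrt 2)⁻¹ * ((1:ℤ):ℝ))^2 + ((Real.sqrt 2)⁻¹ * ((1:ℤ):ℝ))^2
          + ((Real.sqrt 2)⁻¹ * ((0:ℤ):ℝ))^2 + ((Real.sqrt 2)⁻¹ * ((0:ℤ):ℝ))^2 = 1 := by
        push_cast
        field_simp <;> nlinarith [hs2]
      rw [hone]
      norm_num
    obtain ⟨x0, hm3x0⟩ : ∃ x0 : G3, m3 x0 = su3block (eQ (1/12)) (qmatO (1,1,0,0)) :=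
      ⟨⟨⟨su3block (eQ (1/12)) (qmatO (1,1,0,0)), hM0U⟩, mem_SU3_of hM0U hM0det⟩, rfl⟩
    have hx0BO : m3 x0 ∈ BO 6 := by
      rw [hm3x0]
      exact ⟨eQ (1/12), by rw [show (2*6 : ℕ) = 12 from rfl]; exact hu0_12,
        qmatO (1,1,0,0), (twoO_iff _).mpr (Or.inr ⟨_, by decide, rfl⟩),
        Or.inr ⟨notT _ (by decide), hu0_6⟩, rfl⟩
    have hx0gen : x0 ∈ sgOf (BO 6) := Subgroup.subset_closure hx0BO
    -- membership in sgOf (BO 12) forces matrix in BO 12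
    have hmemBO : ∀ x, x ∈ sgOf (BO 12) → m3 x ∈ BO 12 := by
      intro x hx
      refine Subgroup.closure_induction (fun y hy => hy) ?_ ?_ ?_ hx
      · rw [m3_one]; exact BO_one 12
      · intro a b _ _ ha hb
        rw [m3_mul]; exact BO12_mul ha hb
      · intro a _ ha
        rw [m3_inv]; exact BO12_star ha
    have hconj : (MulAut.conj g).toMonoidHom x0 = g * x0 * g⁻¹ := by
      rw [MulEquiv.coe_toMonoidHom, MulAut.conj_apply]
    have hy : g * x0 * g⁻¹ ∈ sgOf (BO 12) := by
      rw [← hconj]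
      exact hg (Subgroup.mem_map_of_mem (MulAut.conj g).toMonoidHom hx0gen)
    have hyBO := hmemBO _ hy
    have htr_eq : (m3 (g * x0 * g⁻¹)).trace = (m3 x0).trace := by
      rw [m3_mul, m3_mul, Matrix.trace_mul_cycle, ← m3_mul, inv_mul_cancel, m3_one,
        one_mul]
    -- |trace|² = 3 for x₀
    have hre0 : ((eQ (1/12))^3).re = 0 := by
      rw [eQ_pow, show ((3:ℕ):ℚ) * (1/12) = 1/4 by norm_num, eQ_re,
        show 2*Real.pi*((1/4:ℚ):ℝ) = Real.pi/2 by push_cast; ring, Real.cos_pi_div_two]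
    have htr0 : ‖(m3 x0).trace‖^2 = 3 := by
      rw [hm3x0, su3_trace, trS, absSq_trace (Real.sqrt 2) hu0u, hre0]
      rw [hs2]
      ring
    have habs : ‖(m3 (g * x0 * g⁻¹)).trace‖^2 = 3 := by
      rw [htr_eq]; exact htr0
    -- but no element of BO 12 has |trace|² = 3
    obtain ⟨u, hu24, A, hAO, hflag, hMeq⟩ := hyBO
    rw [hMeq] at habs
    have huu : u * (starRingEnd ℂ) u = 1 := unit_of_pow (by norm_num : (2*12:ℕ) ≠ 0) hu24
    have hu3u : (u^3) * (starRingEnd ℂ) (u^3) = 1 := by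
      calc u^3 * (starRingEnd ℂ) (u^3) = (u * (starRingEnd ℂ) u)^3 := by rw [_root_.map_pow]; ring
        _ = 1 := by rw [huu, one_pow]
    rcases hflag with ⟨hAT, hu12⟩ | ⟨hAT, hu12⟩
    · rw [twoT_eq] at hAT
      obtain ⟨X, hX, rfl⟩ := hAT
      rw [su3_trace, trH, absSq_trace _ huu] at habs
      have hw4 : (u^3)^4 = 1 := by rw [← pow_mul]; exact hu12
      rcases K3 hw4 with h | h | h <;> rcases dX1 X hX with h1 | h1 | h1 | h1 | h1 <;>
        rw [h, h1] at habs <;> push_cast at habs <;> norm_num at habs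
    · rcases (twoO_iff _).mp hAO with ⟨X, hX, rfl⟩ | ⟨q, hq, rfl⟩
      · exact absurd (by rw [twoT_eq]; exact ⟨X, hX, rfl⟩) hAT
      rw [su3_trace, trO, absSq_trace _ huu] at habs
      have hw4 : (u^3)^4 = -1 := by rw [← pow_mul]; exact hu12
      have hre2 := K4 hu3u hw4
      rcases dq1 q hq with h1 | h1 | h1 <;> rw [h1] at habs <;> push_cast at habs
      · norm_num at habs
      · have hr0 : Real.sqrt 2 * ((u^3).re) = 0 := by nlinarith [habs, hs2]
        rcases mul_eq_zero.mp hr0 with h | h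
        · exact hsqne h
        · rw [h] at hre2; norm_num at hre2
      · have hr0 : Real.sqrt 2 * ((u^3).re) = 0 := by nlinarith [habs, hs2]
        rcases mul_eq_zero.mp hr0 with h | h
        · exact hsqne h
        · rw [h] at hre2; norm_num at hre2
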